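/- arXiv:1410.1220 — 6 statements merged into one kernel-verified Lean document; each statement's English description precedes it below -/
import Mathlib

section
/- There exists a unique C¹ matrix-valued function R₂ᴳ : [0,T] → ℝ^{n×n} satisfying R₂ᴳ'(t) + (R₂ᴳ(t)ᵀ + R₂ᴳ(t))A + (1/2)(R₂ᴳ(t)ᵀ + R₂ᴳ(t))σσᵀ(R₂ᴳ(t)ᵀ + R₂ᴳ(t)) = 0 for all t ∈ [0,T] with R₂ᴳ(T) = Θ, and, given this R₂ᴳ, there exists a unique C¹ row-vector-valued function R₁ᴳ : [0,T] → ℝ^{1×n} satisfying R₁ᴳ'(t) + R₁ᴳ(t)(A + σσᵀ(R₂ᴳ(t)ᵀ + R₂ᴳ(t))) + Bᵀ(R₂ᴳ(t)ᵀ + R₂ᴳ(t)) = 0 for all t ∈ [0,T] with R₁ᴳ(T) = θ. -/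
open Matrix Set Filter NormedSpace Topology MeasureTheory intervalIntegral

noncomputable section Statement2Aux

/-- Instance-neutral derivative notion (uses only the canonical matrix topology). -/
def HasDerivAtM {a b : ℕ} (f : ℝ → Matrix (Fin a) (Fin b) ℝ) (f' : Matrix (Fin a) (Fin b) ℝ)
    (t : ℝ) : Prop := Tendsto (slope f t) (𝓝[≠] t) (𝓝 f')

section Lworld
attribute [local instance] Matrix.linftyOpNormedAddCommGroup Matrix.linftyOpNormedSpace
  Matrix.linftyOpNormedRing Matrix.linftyOpNormedAlgebra

instance mat_complete_L {n : ℕ} : CompleteSpace (Matrix (Fin n) (Fin n) ℝ) :=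
  FiniteDimensional.complete ℝ _

theorem expDerivM {n : ℕ} (A0 : Matrix (Fin n) (Fin n) ℝ) (t : ℝ) :
    HasDerivAtM (fun u : ℝ => exp (u • A0)) (A0 * exp (t • A0)) t := by
  rw [HasDerivAtM]
  exact (hasDerivAt_iff_tendsto_slope).mp (hasDerivAt_exp_smul_const' (𝕂 := ℝ) A0 t)

theorem invDerivM {n : ℕ} {X : ℝ → Matrix (Fin n) (Fin n) ℝ} {X' : Matrix (Fin n) (Fin n) ℝ}
    {t : ℝ} (hX : HasDerivAtM X X' t) (hu : IsUnit (X t)) :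
    HasDerivAtM (fun s => Ring.inverse (X s))
      (-(Ring.inverse (X t) * X' * Ring.inverse (X t))) t := by
  have hX2 : HasDerivAt X X' t := hasDerivAt_iff_tendsto_slope.mpr hX
  have h0 : HasFDerivAt Ring.inverse
      (-(ContinuousLinearMap.mulLeftRight ℝ _ ↑hu.unit⁻¹ ↑hu.unit⁻¹)) (X t) := by
    have := hasFDerivAt_ringInverse (𝕜 := ℝ) hu.unit
    rwa [hu.unit_spec] at this
  have h := h0.comp_hasDerivAt t hX2
  rw [HasDerivAtM]
  refine (hasDerivAt_iff_tendsto_slope).mp ?_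
  convert h using 1
  simp [ContinuousLinearMap.mulLeftRight_apply, Function.comp_def, Matrix.nonsing_inv_eq_ringInverse]
  rw [ContinuousLinearMap.neg_apply, ContinuousLinearMap.mulLeftRight_apply, ← Ring.inverse_unit,
    hu.unit_spec]

end Lworld

section Eworld
attribute [local instance] Matrix.normedAddCommGroup Matrix.normedSpace

variable {a b c : ℕ}

instance mat_complete_E : CompleteSpace (Matrix (Fin a) (Fin b) ℝ) :=
  FiniteDimensional.complete ℝ _

instance matENM : ENormedAddMonoid (Matrix (Fin a) (Fin b) ℝ) :=
  (inferInstance : @ENormedAddMonoid (Matrix (Fin a) (Fin b) ℝ)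
    PseudoMetricSpace.toUniformSpace.toTopologicalSpace)

instance matPMS : TopologicalSpace.PseudoMetrizableSpace (Matrix (Fin a) (Fin b) ℝ) :=
  (inferInstance : @TopologicalSpace.PseudoMetrizableSpace (Matrix (Fin a) (Fin b) ℝ)
    PseudoMetricSpace.toUniformSpace.toTopologicalSpace)

theorem hasDerivAtM_iff {f : ℝ → Matrix (Fin a) (Fin b) ℝ} {f' : Matrix (Fin a) (Fin b) ℝ}
    {t : ℝ} : HasDerivAtM f f' t ↔ HasDerivAt f f' t := by
  exact hasDerivAt_iff_tendsto_slope.symm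

def mulCLM (a b c : ℕ) : Matrix (Fin a) (Fin b) ℝ →L[ℝ]
    Matrix (Fin b) (Fin c) ℝ →L[ℝ] Matrix (Fin a) (Fin c) ℝ :=
  LinearMap.toContinuousLinearMap
  { toFun := fun A => LinearMap.toContinuousLinearMap
      { toFun := fun B => A * B
        map_add' := fun x y => Matrix.mul_add A x y
        map_smul' := fun r x => (Matrix.mul_smul A r x) }
    map_add' := fun x y => by ext z : 1; simp [Matrix.add_mul]
    map_smul' := fun r x => by ext z : 1; simp [Matrix.smul_mul] }

@[simp] theorem mulCLM_apply (A : Matrix (Fin a) (Fin b) ℝ) (B : Matrix (Fin b) (Fin c) ℝ) :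
    mulCLM a b c A B = A * B := rfl

theorem HasDerivAt.mmul {f : ℝ → Matrix (Fin a) (Fin b) ℝ} {g : ℝ → Matrix (Fin b) (Fin c) ℝ}
    {f' : Matrix (Fin a) (Fin b) ℝ} {g' : Matrix (Fin b) (Fin c) ℝ} {t : ℝ}
    (hf : HasDerivAt f f' t) (hg : HasDerivAt g g' t) :
    HasDerivAt (fun s => f s * g s) (f' * g t + f t * g') t := by
  letI : NormedAddCommGroup (Matrix (Fin b) (Fin c) ℝ →L[ℝ] Matrix (Fin a) (Fin c) ℝ) :=
    ContinuousLinearMap.toNormedAddCommGroup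
  letI : NormedSpace ℝ (Matrix (Fin b) (Fin c) ℝ →L[ℝ] Matrix (Fin a) (Fin c) ℝ) :=
    ContinuousLinearMap.toNormedSpace
  have h1 : HasDerivAt (fun s => mulCLM a b c (f s)) (mulCLM a b c f') t :=
    (mulCLM a b c).hasFDerivAt.comp_hasDerivAt t hf
  exact h1.clm_apply hg

theorem HasDerivWithinAt.mmul {f : ℝ → Matrix (Fin a) (Fin b) ℝ} {g : ℝ → Matrix (Fin b) (Fin c) ℝ}
    {f' : Matrix (Fin a) (Fin b) ℝ} {g' : Matrix (Fin b) (Fin c) ℝ} {s : Set ℝ} {t : ℝ}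
    (hf : HasDerivWithinAt f f' s t) (hg : HasDerivWithinAt g g' s t) :
    HasDerivWithinAt (fun u => f u * g u) (f' * g t + f t * g') s t := by
  letI : NormedAddCommGroup (Matrix (Fin b) (Fin c) ℝ →L[ℝ] Matrix (Fin a) (Fin c) ℝ) :=
    ContinuousLinearMap.toNormedAddCommGroup
  letI : NormedSpace ℝ (Matrix (Fin b) (Fin c) ℝ →L[ℝ] Matrix (Fin a) (Fin c) ℝ) :=
    ContinuousLinearMap.toNormedSpace
  have h1 : HasDerivWithinAt (fun u => mulCLM a b c (f u)) (mulCLM a b c f') s t :=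
    (mulCLM a b c).hasFDerivAt.comp_hasDerivWithinAt t hf
  exact h1.clm_apply hg

def trCLM (a b : ℕ) : Matrix (Fin a) (Fin b) ℝ →L[ℝ] Matrix (Fin b) (Fin a) ℝ :=
  LinearMap.toContinuousLinearMap
  { toFun := fun A => Aᵀ
    map_add' := fun x y => Matrix.transpose_add x y
    map_smul' := fun r x => Matrix.transpose_smul r x }

@[simp] theorem trCLM_apply (A : Matrix (Fin a) (Fin b) ℝ) : trCLM a b A = Aᵀ := rfl

theorem HasDerivAt.mtrans {f : ℝ → Matrix (Fin a) (Fin b) ℝ}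
    {f' : Matrix (Fin a) (Fin b) ℝ} {t : ℝ} (hf : HasDerivAt f f' t) :
    HasDerivAt (fun s => (f s)ᵀ) f'ᵀ t :=
  (trCLM a b).hasFDerivAt.comp_hasDerivAt t hf

theorem HasDerivWithinAt.mtrans {f : ℝ → Matrix (Fin a) (Fin b) ℝ}
    {f' : Matrix (Fin a) (Fin b) ℝ} {s : Set ℝ} {t : ℝ} (hf : HasDerivWithinAt f f' s t) :
    HasDerivWithinAt (fun u => (f u)ᵀ) f'ᵀ s t :=
  (trCLM a b).hasFDerivAt.comp_hasDerivWithinAt t hf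

def qCLM {n : ℕ} (v : Fin n → ℝ) : Matrix (Fin n) (Fin n) ℝ →L[ℝ] ℝ :=
  LinearMap.toContinuousLinearMap
  { toFun := fun M => v ⬝ᵥ (M *ᵥ v)
    map_add' := fun x y => by simp [Matrix.add_mulVec, dotProduct_add]
    map_smul' := fun r x => by simp [Matrix.smul_mulVec, dotProduct_smul] }

@[simp] theorem qCLM_apply {n : ℕ} (v : Fin n → ℝ) (M : Matrix (Fin n) (Fin n) ℝ) :
    qCLM v M = v ⬝ᵥ (M *ᵥ v) := rfl

end Eworld

theorem isUnit_one_add_psd_mul {n : ℕ} {M N : Matrix (Fin n) (Fin n) ℝ}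
    (hM : M.PosSemidef) (hN : N.PosSemidef) : IsUnit (1 + M * N) := by
  rw [Matrix.isUnit_iff_isUnit_det, isUnit_iff_ne_zero]
  intro hdet
  obtain ⟨v, hv, h⟩ := (Matrix.exists_mulVec_eq_zero_iff).mpr hdet
  have h1 : v + M *ᵥ (N *ᵥ v) = 0 := by
    simpa [Matrix.add_mulVec, Matrix.one_mulVec, Matrix.mulVec_mulVec] using h
  have h2 : v = -(M *ᵥ (N *ᵥ v)) := eq_neg_of_add_eq_zero_left h1
  have h3 : 0 ≤ v ⬝ᵥ (N *ᵥ v) := by simpa using hN.dotProduct_mulVec_nonneg v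
  have h4 : v ⬝ᵥ (N *ᵥ v) ≤ 0 := by
    have : v ⬝ᵥ (N *ᵥ v) = -((N *ᵥ v) ⬝ᵥ (M *ᵥ (N *ᵥ v))) := by
      nth_rewrite 1 [h2]
      rw [neg_dotProduct, dotProduct_comm]
    rw [this, neg_nonpos]
    simpa using hM.dotProduct_mulVec_nonneg (N *ᵥ v)
  have h5 : N *ᵥ v = 0 := by
    have := (hN.dotProduct_mulVec_zero_iff v)
    apply this.mp
    simpa using le_antisymm h4 h3
  exact hv (by simpa [h5] using h2)


section Main
attribute [local instance] Matrix.normedAddCommGroup Matrix.normedSpace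

variable {n : ℕ} (T : ℝ) (A σ Θ : Matrix (Fin n) (Fin n) ℝ)

def eAf (t : ℝ) : Matrix (Fin n) (Fin n) ℝ := exp (t • A)
def Sgf : Matrix (Fin n) (Fin n) ℝ := σ * σᵀ
def Th2f : Matrix (Fin n) (Fin n) ℝ := Θᵀ + Θ
def Yf (t : ℝ) : Matrix (Fin n) (Fin n) ℝ := eAf Aᵀ (T - t) * Th2f Θ
def fff (s : ℝ) : Matrix (Fin n) (Fin n) ℝ := eAf A (T - s) * Sgf σ * eAf Aᵀ (T - s)
def Mff (t : ℝ) : Matrix (Fin n) (Fin n) ℝ := ∫ s in t..T, fff T A σ s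
def Xf (t : ℝ) : Matrix (Fin n) (Fin n) ℝ := eAf A (t - T) * (1 - Mff T A σ t * Th2f Θ)
def Wf (t : ℝ) : Matrix (Fin n) (Fin n) ℝ := Ring.inverse (Xf T A σ Θ t)
def Pf (t : ℝ) : Matrix (Fin n) (Fin n) ℝ := Yf T A Θ t * Wf T A σ Θ t

theorem eAf_add {s u : ℝ} : eAf A (s + u) = eAf A s * eAf A u := by
  rw [eAf, add_smul]
  exact Matrix.exp_add_of_commute _ _ (((Commute.refl A).smul_left s).smul_right u)

theorem eAf_zero : eAf A 0 = 1 := by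
  rw [eAf, zero_smul]; exact exp_zero


theorem heA (A0 : Matrix (Fin n) (Fin n) ℝ) (t : ℝ) :
    HasDerivAt (eAf A0) (A0 * eAf A0 t) t :=
  hasDerivAtM_iff.mp (expDerivM A0 t)

theorem heA_cont (A0 : Matrix (Fin n) (Fin n) ℝ) : Continuous (eAf A0) :=
  continuous_iff_continuousAt.mpr fun t => (heA A0 t).continuousAt

theorem eAf_mul_neg (A0 : Matrix (Fin n) (Fin n) ℝ) (s : ℝ) :
    eAf A0 s * eAf A0 (-s) = 1 := by
  rw [← eAf_add]; simp [eAf_zero]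

/-- derivative of `t ↦ eAf A0 (c - t)` -/
theorem heA_rev (A0 : Matrix (Fin n) (Fin n) ℝ) (c t : ℝ) :
    HasDerivAt (fun u => eAf A0 (c - u)) (-(A0 * eAf A0 (c - t))) t := by
  have h := (heA A0 (c - t)).scomp t ((hasDerivAt_id t).const_sub c)
  simp only [Function.comp_def, neg_smul, one_smul] at h
  exact h

/-- derivative of `t ↦ eAf A0 (t - c)` -/
theorem heA_fwd (A0 : Matrix (Fin n) (Fin n) ℝ) (c t : ℝ) :
    HasDerivAt (fun u => eAf A0 (u - c)) (A0 * eAf A0 (t - c)) t := by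
  have h := (heA A0 (t - c)).scomp t ((hasDerivAt_id t).sub_const c)
  simp only [Function.comp_def, id_eq, one_smul] at h
  exact h

theorem hY_deriv (t : ℝ) : HasDerivAt (Yf T A Θ) (-(Aᵀ * Yf T A Θ t)) t := by
  have h := (heA_rev Aᵀ T t).mmul (hasDerivAt_const t (Th2f Θ))
  show HasDerivAt (fun s => Yf T A Θ s) _ t
  simpa [Yf, neg_mul, Matrix.mul_assoc] using h

theorem hY_cont : Continuous (Yf T A Θ) :=
  continuous_iff_continuousAt.mpr fun t => (hY_deriv T A Θ t).continuousAt

theorem contMulE {a b c : ℕ} {f : ℝ → Matrix (Fin a) (Fin b) ℝ} {g : ℝ → Matrix (Fin b) (Fin c) ℝ}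
    (hf : Continuous f) (hg : Continuous g) : Continuous fun t => f t * g t := by
  have h1 : Continuous fun t => mulCLM a b c (f t) := (mulCLM a b c).continuous.comp hf
  exact h1.clm_apply hg

theorem contMulOnE {a b c : ℕ} {s : Set ℝ} {f : ℝ → Matrix (Fin a) (Fin b) ℝ}
    {g : ℝ → Matrix (Fin b) (Fin c) ℝ}
    (hf : ContinuousOn f s) (hg : ContinuousOn g s) : ContinuousOn (fun t => f t * g t) s := by
  have h1 : ContinuousOn (fun t => mulCLM a b c (f t)) s :=
    ((mulCLM a b c).continuous.comp_continuousOn hf)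
  exact h1.clm_apply hg

theorem hff_cont : Continuous (fff T A σ) := by
  refine contMulE (contMulE ?_ continuous_const) ?_
  · exact (heA_cont A).comp (continuous_const.sub continuous_id)
  · exact (heA_cont Aᵀ).comp (continuous_const.sub continuous_id)

theorem hff_int (t u : ℝ) : IntervalIntegrable (fff T A σ) volume t u :=
  (hff_cont T A σ).intervalIntegrable t u

theorem hM_deriv (t : ℝ) : HasDerivAt (Mff T A σ) (-fff T A σ t) t :=
  integral_hasDerivAt_left (hff_int T A σ t T)
    ((hff_cont T A σ).stronglyMeasurable.stronglyMeasurableAtFilter)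
    (hff_cont T A σ).continuousAt

theorem hM_T : Mff T A σ T = 0 := integral_same

theorem eAf_transpose (A0 : Matrix (Fin n) (Fin n) ℝ) (u : ℝ) :
    (eAf A0 u)ᵀ = eAf A0ᵀ u := by
  rw [eAf, eAf, ← Matrix.transpose_smul, Matrix.exp_transpose]

theorem hff_symm (s : ℝ) : (fff T A σ s)ᵀ = fff T A σ s := by
  have h1 : (eAf A (T - s))ᵀ = eAf Aᵀ (T - s) := eAf_transpose A _
  have h2 : (eAf Aᵀ (T - s))ᵀ = eAf A (T - s) := by
    rw [← h1, Matrix.transpose_transpose]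
  simp only [fff, Sgf, Matrix.transpose_mul, Matrix.transpose_transpose, h1, h2]
  noncomm_ring

theorem hff_psd (s : ℝ) : (fff T A σ s).PosSemidef := by
  have h := Matrix.posSemidef_self_mul_conjTranspose (eAf A (T - s) * σ)
  have h1 : (eAf A (T - s))ᵀ = eAf Aᵀ (T - s) := eAf_transpose A _
  have e : (eAf A (T - s) * σ) * (eAf A (T - s) * σ)ᴴ = fff T A σ s := by
    rw [Matrix.conjTranspose_eq_transpose_of_trivial, Matrix.transpose_mul, h1]
    simp only [fff, Sgf]
    noncomm_ring
  rwa [e] at h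

theorem hM_symm (t : ℝ) : (Mff T A σ t)ᵀ = Mff T A σ t := by
  have h := (trCLM n n).intervalIntegral_comp_comm (hff_int T A σ t T)
  have h2 : (Mff T A σ t)ᵀ = trCLM n n (Mff T A σ t) := rfl
  rw [h2, Mff]
  refine Eq.trans h.symm ?_
  refine intervalIntegral.integral_congr fun s _ => ?_
  exact hff_symm T A σ s

theorem hM_psd {t : ℝ} (ht : t ≤ T) : (Mff T A σ t).PosSemidef := by
  refine Matrix.PosSemidef.of_dotProduct_mulVec_nonneg ?_ ?_
  · rw [Matrix.IsHermitian, Matrix.conjTranspose_eq_transpose_of_trivial, hM_symm]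
  · intro v
    have h := (qCLM v).intervalIntegral_comp_comm (hff_int T A σ t T)
    have h2 : star v ⬝ᵥ (Mff T A σ t *ᵥ v) = qCLM v (Mff T A σ t) := by simp
    rw [h2, Mff]
    refine le_of_le_of_eq ?_ h
    refine intervalIntegral.integral_nonneg ht fun s _ => ?_
    exact (by simpa using (hff_psd T A σ s).dotProduct_mulVec_nonneg v :
      0 ≤ v ⬝ᵥ (fff T A σ s *ᵥ v))


theorem hX_T : Xf T A σ Θ T = 1 := by
  simp [Xf, hM_T, eAf_zero]

theorem hY_T : Yf T A Θ T = Th2f Θ := by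
  simp [Yf, eAf_zero]

theorem hX_deriv (t : ℝ) :
    HasDerivAt (Xf T A σ Θ) (A * Xf T A σ Θ t + Sgf σ * Yf T A Θ t) t := by
  have hc2 : HasDerivAt (fun u => 1 - Mff T A σ u * Th2f Θ) (fff T A σ t * Th2f Θ) t := by
    have h := ((hM_deriv T A σ t).mmul (hasDerivAt_const t (Th2f Θ))).const_sub 1
    simp at h
    exact h
  have h := (heA_fwd A T t).mmul hc2
  have he : eAf A (t - T) * (fff T A σ t * Th2f Θ) = Sgf σ * Yf T A Θ t := by
    have h1 : eAf A (t - T) * eAf A (T - t) = 1 := by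
      have := eAf_mul_neg A (t - T)
      simpa [neg_sub] using this
    calc eAf A (t - T) * (fff T A σ t * Th2f Θ)
        = (eAf A (t - T) * eAf A (T - t)) * (Sgf σ * (eAf Aᵀ (T - t) * Th2f Θ)) := by
          simp only [fff, Matrix.mul_assoc]
      _ = Sgf σ * Yf T A Θ t := by rw [h1, Matrix.one_mul, Yf]
  show HasDerivAt (fun s => Xf T A σ Θ s) _ t
  simp only [Xf] at h ⊢
  convert h using 1
  rw [he, Matrix.mul_assoc]

theorem hX_cont : Continuous (Xf T A σ Θ) :=
  continuous_iff_continuousAt.mpr fun t => (hX_deriv T A σ Θ t).continuousAt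

theorem hTh2_symm : (Th2f Θ)ᵀ = Th2f Θ := by
  simp only [Th2f, Matrix.transpose_add, Matrix.transpose_transpose]
  exact add_comm _ _

theorem hX_unit (hΘ : (-Θ).PosSemidef) {t : ℝ} (ht : t ≤ T) : IsUnit (Xf T A σ Θ t) := by
  have hTh2 : (-Th2f Θ).PosSemidef := by
    have h : -Th2f Θ = (-Θ)ᵀ + (-Θ) := by
      simp only [Th2f, Matrix.transpose_neg, neg_add]
    rw [h]
    exact hΘ.transpose.add hΘ
  have h2 : IsUnit (1 - Mff T A σ t * Th2f Θ) := by
    have e : 1 - Mff T A σ t * Th2f Θ = 1 + Mff T A σ t * (-Th2f Θ) := by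
      rw [Matrix.mul_neg, sub_eq_add_neg]
    rw [e]
    exact isUnit_one_add_psd_mul (hM_psd T A σ ht) hTh2
  refine IsUnit.mul ?_ h2
  rw [eAf]
  exact Matrix.isUnit_exp _

theorem hXW (hu : IsUnit (Xf T A σ Θ t)) : Xf T A σ Θ t * Wf T A σ Θ t = 1 :=
  Ring.mul_inverse_cancel _ hu

theorem hWX (hu : IsUnit (Xf T A σ Θ t)) : Wf T A σ Θ t * Xf T A σ Θ t = 1 :=
  Ring.inverse_mul_cancel _ hu

theorem hW_deriv (hu : IsUnit (Xf T A σ Θ t)) :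
    HasDerivAt (Wf T A σ Θ)
      (-(Wf T A σ Θ t * (A * Xf T A σ Θ t + Sgf σ * Yf T A Θ t) * Wf T A σ Θ t)) t := by
  have h := invDerivM (hasDerivAtM_iff.mpr (hX_deriv T A σ Θ t)) hu
  exact hasDerivAtM_iff.mp h


theorem ringAux2 {R : Type*} [Ring R] (at_ a s y w x : R) (h : x * w = 1) :
    -(at_ * y) * w + y * -(w * (a * x + s * y) * w)
      = -(at_ * (y * w) + (y * w) * a + (y * w) * s * (y * w)) := by
  have e : y * (w * ((a * x + s * y) * w)) = y * w * a * (x * w) + y * w * s * (y * w) := by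
    noncomm_ring
  rw [h, mul_one] at e
  have e2 : -(at_ * y) * w + y * -(w * (a * x + s * y) * w)
      = -(at_ * (y * w) + y * (w * ((a * x + s * y) * w))) := by noncomm_ring
  rw [e2, e]
  noncomm_ring

theorem hP_deriv {t : ℝ} (hu : IsUnit (Xf T A σ Θ t)) :
    HasDerivAt (Pf T A σ Θ)
      (-(Aᵀ * Pf T A σ Θ t + Pf T A σ Θ t * A
        + Pf T A σ Θ t * Sgf σ * Pf T A σ Θ t)) t := by
  have h := (hY_deriv T A Θ t).mmul (hW_deriv T A σ Θ hu)
  have e := ringAux2 Aᵀ A (Sgf σ) (Yf T A Θ t) (Wf T A σ Θ t) (Xf T A σ Θ t) (hXW T A σ Θ hu)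
  rw [e] at h
  exact h

theorem hSg_symm : (Sgf σ)ᵀ = Sgf σ := by
  simp [Sgf, Matrix.transpose_mul]

theorem hN_zero (t : ℝ) :
    (Xf T A σ Θ t)ᵀ * Yf T A Θ t - (Yf T A Θ t)ᵀ * Xf T A σ Θ t = 0 := by
  have hd : ∀ s : ℝ, HasDerivAt
      (fun u => (Xf T A σ Θ u)ᵀ * Yf T A Θ u - (Yf T A Θ u)ᵀ * Xf T A σ Θ u) 0 s := by
    intro s
    have h := ((hX_deriv T A σ Θ s).mtrans.mmul (hY_deriv T A Θ s)).sub
      ((hY_deriv T A Θ s).mtrans.mmul (hX_deriv T A σ Θ s))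
    refine h.congr_deriv ?_
    symm
    simp only [Matrix.transpose_add, Matrix.transpose_mul, Matrix.transpose_neg,
      Matrix.transpose_transpose, hSg_symm]
    noncomm_ring
  have hconst := is_const_of_deriv_eq_zero (𝕜 := ℝ)
    (fun s => (hd s).differentiableAt) (fun s => (hd s).deriv) t T
  rw [hconst, hX_T, hY_T, Matrix.transpose_one, Matrix.one_mul, Matrix.mul_one, hTh2_symm,
    sub_self]

theorem hP_symm {t : ℝ} (hu : IsUnit (Xf T A σ Θ t)) :
    (Pf T A σ Θ t)ᵀ = Pf T A σ Θ t := by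
  have hNeq : (Xf T A σ Θ t)ᵀ * Yf T A Θ t = (Yf T A Θ t)ᵀ * Xf T A σ Θ t :=
    sub_eq_zero.mp (hN_zero T A σ Θ t)
  have hxw := hXW T A σ Θ hu
  have h1 : (Wf T A σ Θ t)ᵀ * (Xf T A σ Θ t)ᵀ = 1 := by
    rw [← Matrix.transpose_mul, hxw, Matrix.transpose_one]
  set y := Yf T A Θ t
  set w := Wf T A σ Θ t
  set x := Xf T A σ Θ t
  calc (Pf T A σ Θ t)ᵀ = wᵀ * yᵀ := by rw [Pf, Matrix.transpose_mul]
    _ = wᵀ * yᵀ * (x * w) := by rw [hxw, Matrix.mul_one]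
    _ = wᵀ * (yᵀ * x) * w := by noncomm_ring
    _ = wᵀ * (xᵀ * y) * w := by rw [hNeq]
    _ = (wᵀ * xᵀ) * y * w := by noncomm_ring
    _ = y * w := by rw [h1, Matrix.one_mul]
    _ = Pf T A σ Θ t := rfl

def gf (t : ℝ) : Matrix (Fin n) (Fin n) ℝ :=
  Pf T A σ Θ t * A + (1 / 2 : ℝ) • (Pf T A σ Θ t * Sgf σ * Pf T A σ Θ t)

def R2f (t : ℝ) : Matrix (Fin n) (Fin n) ℝ := Θ + ∫ s in t..T, gf T A σ Θ s

theorem hg_hasDeriv {t : ℝ} (hu : IsUnit (Xf T A σ Θ t)) : ∃ d, HasDerivAt (gf T A σ Θ) d t := by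
  refine ⟨_, HasDerivAt.add ((hP_deriv T A σ Θ hu).mmul (hasDerivAt_const t A))
    ((((hP_deriv T A σ Θ hu).mmul (hasDerivAt_const t (Sgf σ))).mmul
      (hP_deriv T A σ Θ hu)).const_smul (1 / 2 : ℝ))⟩

theorem hg_contAt {t : ℝ} (hu : IsUnit (Xf T A σ Θ t)) : ContinuousAt (gf T A σ Θ) t := by
  obtain ⟨d, hd⟩ := hg_hasDeriv T A σ Θ hu
  exact hd.continuousAt

theorem hU_open : IsOpen {t : ℝ | IsUnit (Xf T A σ Θ t)} := by
  have he : {t : ℝ | IsUnit (Xf T A σ Θ t)} = (fun t => (Xf T A σ Θ t).det) ⁻¹' ({0}ᶜ) := by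
    ext t
    simp [Matrix.isUnit_iff_isUnit_det, isUnit_iff_ne_zero]
  rw [he]
  exact (Continuous.matrix_det (hX_cont T A σ Θ)).isOpen_preimage _ (isOpen_compl_singleton)

theorem exists_V (hΘ : (-Θ).PosSemidef) (hT : 0 < T) :
    ∃ V : Set ℝ, IsOpen V ∧ Icc 0 T ⊆ V ∧ (∀ t ∈ V, IsUnit (Xf T A σ Θ t)) ∧
      ∀ t ∈ V, uIcc t T ⊆ {u : ℝ | IsUnit (Xf T A σ Θ u)} := by
  set U := {u : ℝ | IsUnit (Xf T A σ Θ u)} with hU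
  have hTU : T ∈ U := by
    have : IsUnit (Xf T A σ Θ T) := by rw [hX_T]; exact isUnit_one
    exact this
  obtain ⟨ε, hε, hball⟩ := Metric.isOpen_iff.mp (hU_open T A σ Θ) T hTU
  have hIic : Iic T ⊆ U := fun u hu => hX_unit T A σ Θ hΘ hu
  refine ⟨Iio T ∪ Ioo (T - ε) (T + ε), isOpen_Iio.union isOpen_Ioo, ?_, ?_, ?_⟩
  · intro u hu
    rcases lt_or_eq_of_le hu.2 with h | h
    · exact Or.inl h
    · exact Or.inr ⟨by linarith, by linarith⟩
  · intro u hu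
    rcases hu with h | h
    · exact hIic (mem_Iic.mpr (le_of_lt h))
    · have : u ∈ Metric.ball T ε := by
        rw [Real.ball_eq_Ioo]; exact h
      exact hball this
  · intro u hu
    rcases le_or_gt u T with h | h
    · rw [uIcc_of_le h]
      exact fun x hx => hIic hx.2
    · have hu2 : u ∈ Ioo (T - ε) (T + ε) := by
        rcases hu with h' | h'
        · exact absurd h' (not_lt.mpr h.le)
        · exact h'
      rw [uIcc_of_ge h.le]
      intro x hx
      have : x ∈ Metric.ball T ε := by
        rw [Real.ball_eq_Ioo]
        constructor <;> [linarith [hx.1]; linarith [hx.2, hu2.2]]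
      exact hball this


theorem hg_contOn : ContinuousOn (gf T A σ Θ) {u : ℝ | IsUnit (Xf T A σ Θ u)} :=
  fun t ht => (hg_contAt T A σ Θ ht).continuousWithinAt

theorem hR2_deriv {t : ℝ} (ht : IsUnit (Xf T A σ Θ t))
    (hsub : uIcc t T ⊆ {u : ℝ | IsUnit (Xf T A σ Θ u)}) :
    HasDerivAt (R2f T A σ Θ) (-gf T A σ Θ t) t := by
  have hint : IntervalIntegrable (gf T A σ Θ) volume t T :=
    ((hg_contOn T A σ Θ).mono hsub).intervalIntegrable
  have hmeas := (hg_contOn T A σ Θ).stronglyMeasurableAtFilter (μ := volume) (hU_open T A σ Θ) t ht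
  have h := integral_hasDerivAt_left hint hmeas (hg_contAt T A σ Θ ht)
  have h2 := (hasDerivAt_const t Θ).add h
  simp only [zero_add] at h2
  exact h2

theorem hR2_T : R2f T A σ Θ T = Θ := by
  simp [R2f]

theorem hP_T : Pf T A σ Θ T = Th2f Θ := by
  rw [Pf, Wf, hX_T, hY_T, Ring.inverse_one, Matrix.mul_one]

/-- transpose of `gf` -/
theorem hg_transpose {t : ℝ} (hu : IsUnit (Xf T A σ Θ t)) :
    (gf T A σ Θ t)ᵀ = Aᵀ * Pf T A σ Θ t
      + (1 / 2 : ℝ) • (Pf T A σ Θ t * Sgf σ * Pf T A σ Θ t) := by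
  simp only [gf, Matrix.transpose_add, Matrix.transpose_smul, Matrix.transpose_mul,
    hSg_symm, hP_symm T A σ Θ hu, Matrix.mul_assoc]

/-- key: `(R2f t)ᵀ + R2f t = Pf t` on `[0, T]`. -/
theorem hR2_P (hΘ : (-Θ).PosSemidef) (hT : 0 < T) {t : ℝ} (ht : t ∈ Icc 0 T) :
    (R2f T A σ Θ t)ᵀ + R2f T A σ Θ t = Pf T A σ Θ t := by
  have hIic : ∀ u : ℝ, u ≤ T → IsUnit (Xf T A σ Θ u) := fun u hu => hX_unit T A σ Θ hΘ hu
  have hQd : ∀ u ∈ Icc t T, HasDerivAt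
      (fun v => (R2f T A σ Θ v)ᵀ + R2f T A σ Θ v - Pf T A σ Θ v) 0 u := by
    intro u hu
    have huU : IsUnit (Xf T A σ Θ u) := hIic u hu.2
    have hsub : uIcc u T ⊆ {v : ℝ | IsUnit (Xf T A σ Θ v)} := by
      rw [uIcc_of_le hu.2]; exact fun x hx => hIic x hx.2
    have hR := hR2_deriv T A σ Θ huU hsub
    have h := (hR.mtrans.add hR).sub (hP_deriv T A σ Θ huU)
    refine h.congr_deriv ?_
    symm
    rw [Matrix.transpose_neg, hg_transpose T A σ Θ huU]
    simp only [gf]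
    module
  have hcont : ContinuousOn (fun v => (R2f T A σ Θ v)ᵀ + R2f T A σ Θ v - Pf T A σ Θ v)
      (Icc t T) := fun u hu => ((hQd u hu).continuousAt).continuousWithinAt
  have hconst := constant_of_has_deriv_right_zero hcont
    (fun u hu => ((hQd u (Ico_subset_Icc_self hu)).hasDerivWithinAt))
  have hQT := hconst T (right_mem_Icc.mpr ht.2)
  have hQT2 : (R2f T A σ Θ T)ᵀ + R2f T A σ Θ T - Pf T A σ Θ T = 0 := by
    rw [hR2_T, hP_T]
    simp [Th2f]
  rw [hQT2] at hQT
  have := hQT.symm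
  exact sub_eq_zero.mp this


theorem hR2_smooth (hΘ : (-Θ).PosSemidef) (hT : 0 < T) :
    ContDiffOn ℝ 1 (R2f T A σ Θ) (Icc 0 T) := by
  obtain ⟨V, hVo, hIccV, hVU, hVsub⟩ := exists_V T A σ Θ hΘ hT
  have hd : ∀ u ∈ V, HasDerivAt (R2f T A σ Θ) (-gf T A σ Θ u) u := fun u hu =>
    hR2_deriv T A σ Θ (hVU u hu) (hVsub u hu)
  have h1 : ContDiffOn ℝ ((0 : ℕ) + 1) (R2f T A σ Θ) V := by
    rw [contDiffOn_succ_iff_deriv_of_isOpen hVo]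
    refine ⟨fun u hu => ((hd u hu).differentiableAt).differentiableWithinAt, ?_, ?_⟩
    · intro h
      exact absurd h (by simp)
    · rw [(by norm_num : ((0:ℕ) : WithTop ℕ∞) = 0), contDiffOn_zero]
      have heq : EqOn (deriv (R2f T A σ Θ)) (fun u => -gf T A σ Θ u) V :=
        fun u hu => (hd u hu).deriv
      exact ContinuousOn.congr ((hg_contOn T A σ Θ).mono hVU |>.neg) heq
  have h2 := h1.mono hIccV
  norm_num at h2
  exact h2

theorem hR2_ode (hΘ : (-Θ).PosSemidef) (hT : 0 < T) : ∀ t ∈ Icc 0 T,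
    derivWithin (R2f T A σ Θ) (Icc 0 T) t + ((R2f T A σ Θ t)ᵀ + R2f T A σ Θ t) * A
      + (1 / 2 : ℝ) • (((R2f T A σ Θ t)ᵀ + R2f T A σ Θ t) * (σ * σᵀ)
        * ((R2f T A σ Θ t)ᵀ + R2f T A σ Θ t)) = 0 := by
  intro t ht
  have hu : IsUnit (Xf T A σ Θ t) := hX_unit T A σ Θ hΘ ht.2
  have hsub : uIcc t T ⊆ {u : ℝ | IsUnit (Xf T A σ Θ u)} := by
    rw [uIcc_of_le ht.2]
    exact fun x hx => hX_unit T A σ Θ hΘ hx.2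
  have hd := hR2_deriv T A σ Θ hu hsub
  have hdw : derivWithin (R2f T A σ Θ) (Icc 0 T) t = -gf T A σ Θ t :=
    (hd.hasDerivWithinAt).derivWithin (uniqueDiffOn_Icc hT t ht)
  rw [hdw, hR2_P T A σ Θ hΘ hT ht]
  show -gf T A σ Θ t + Pf T A σ Θ t * A
      + (1 / 2 : ℝ) • (Pf T A σ Θ t * Sgf σ * Pf T A σ Θ t) = 0
  simp only [gf]
  abel


variable (B : Matrix (Fin n) (Fin 1) ℝ) (θv : Matrix (Fin 1) (Fin n) ℝ)

def Jf (t : ℝ) : Matrix (Fin 1) (Fin n) ℝ := ∫ s in t..T, Bᵀ * Yf T A Θ s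
def R1f (t : ℝ) : Matrix (Fin 1) (Fin n) ℝ := (θv + Jf T A Θ B t) * Wf T A σ Θ t

theorem hJ_integrand_cont : Continuous fun s => Bᵀ * Yf T A Θ s :=
  contMulE continuous_const (hY_cont T A Θ)

theorem hJ_deriv (t : ℝ) : HasDerivAt (Jf T A Θ B) (-(Bᵀ * Yf T A Θ t)) t :=
  integral_hasDerivAt_left ((hJ_integrand_cont T A Θ B).intervalIntegrable t T)
    ((hJ_integrand_cont T A Θ B).stronglyMeasurable.stronglyMeasurableAtFilter)
    (hJ_integrand_cont T A Θ B).continuousAt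

theorem hJ_T : Jf T A Θ B T = 0 := integral_same

theorem hJ_cont : Continuous (Jf T A Θ B) :=
  continuous_iff_continuousAt.mpr fun t => (hJ_deriv T A Θ B t).continuousAt

theorem hR1_T : R1f T A σ Θ B θv T = θv := by
  rw [R1f, hJ_T, add_zero, Wf, hX_T, Ring.inverse_one, Matrix.mul_one]

theorem ringAux3 {k m : ℕ} (p b : Matrix (Fin k) (Fin m) ℝ)
    (y w x a s : Matrix (Fin m) (Fin m) ℝ) (hxw : x * w = 1) :
    -(b * y) * w + p * -(w * (a * x + s * y) * w)
      = -((p * w) * (a + s * (y * w)) + b * (y * w)) := by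
  have e1 : (a * x + s * y) * w = a + s * (y * w) := by
    rw [Matrix.add_mul, Matrix.mul_assoc, hxw, Matrix.mul_one, Matrix.mul_assoc]
  rw [Matrix.mul_assoc w, e1, Matrix.mul_neg, ← Matrix.mul_assoc, Matrix.neg_mul,
    Matrix.mul_assoc b, ← neg_add, add_comm]

theorem hR1_deriv {t : ℝ} (hu : IsUnit (Xf T A σ Θ t)) :
    HasDerivAt (R1f T A σ Θ B θv)
      (-(R1f T A σ Θ B θv t * (A + Sgf σ * Pf T A σ Θ t) + Bᵀ * Pf T A σ Θ t)) t := by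
  have h := (((hJ_deriv T A Θ B t).const_add θv)).mmul (hW_deriv T A σ Θ hu)
  have e := ringAux3 (θv + Jf T A Θ B t) Bᵀ (Yf T A Θ t) (Wf T A σ Θ t) (Xf T A σ Θ t)
    A (Sgf σ) (hXW T A σ Θ hu)
  rw [e] at h
  exact h

theorem hR1_contOn : ContinuousOn (R1f T A σ Θ B θv) {u : ℝ | IsUnit (Xf T A σ Θ u)} :=
  fun u hu => (hR1_deriv T A σ Θ B θv hu).continuousAt.continuousWithinAt

theorem hP_contOn : ContinuousOn (Pf T A σ Θ) {u : ℝ | IsUnit (Xf T A σ Θ u)} :=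
  fun u hu => (hP_deriv T A σ Θ hu).continuousAt.continuousWithinAt

theorem hR1_smooth (hΘ : (-Θ).PosSemidef) (hT : 0 < T) :
    ContDiffOn ℝ 1 (R1f T A σ Θ B θv) (Icc 0 T) := by
  set U := {u : ℝ | IsUnit (Xf T A σ Θ u)} with hUdef
  have hUo : IsOpen U := hU_open T A σ Θ
  have hIccU : Icc 0 T ⊆ U := fun u hu => hX_unit T A σ Θ hΘ hu.2
  have hd : ∀ u ∈ U, HasDerivAt (R1f T A σ Θ B θv)
      (-(R1f T A σ Θ B θv u * (A + Sgf σ * Pf T A σ Θ u) + Bᵀ * Pf T A σ Θ u)) u :=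
    fun u hu => hR1_deriv T A σ Θ B θv hu
  have h1 : ContDiffOn ℝ ((0 : ℕ) + 1) (R1f T A σ Θ B θv) U := by
    rw [contDiffOn_succ_iff_deriv_of_isOpen hUo]
    refine ⟨fun u hu => ((hd u hu).differentiableAt).differentiableWithinAt, ?_, ?_⟩
    · intro h
      exact absurd h (by simp)
    · rw [(by norm_num : ((0:ℕ) : WithTop ℕ∞) = 0), contDiffOn_zero]
      have heq : EqOn (deriv (R1f T A σ Θ B θv))
          (fun u => -(R1f T A σ Θ B θv u * (A + Sgf σ * Pf T A σ Θ u)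
            + Bᵀ * Pf T A σ Θ u)) U := fun u hu => (hd u hu).deriv
      refine ContinuousOn.congr ?_ heq
      refine ContinuousOn.neg ?_
      refine ContinuousOn.add ?_ (contMulOnE continuousOn_const (hP_contOn T A σ Θ))
      exact contMulOnE (hR1_contOn T A σ Θ B θv)
        (continuousOn_const.add (contMulOnE continuousOn_const (hP_contOn T A σ Θ)))
  have h2 := (h1.mono hIccU)
  norm_num at h2
  exact h2

theorem hR1_ode (hΘ : (-Θ).PosSemidef) (hT : 0 < T) : ∀ t ∈ Icc 0 T,
    derivWithin (R1f T A σ Θ B θv) (Icc 0 T) t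
      + R1f T A σ Θ B θv t * (A + (σ * σᵀ) * ((R2f T A σ Θ t)ᵀ + R2f T A σ Θ t))
      + Bᵀ * ((R2f T A σ Θ t)ᵀ + R2f T A σ Θ t) = 0 := by
  intro t ht
  have hu : IsUnit (Xf T A σ Θ t) := hX_unit T A σ Θ hΘ ht.2
  have hd := hR1_deriv T A σ Θ B θv hu
  have hdw : derivWithin (R1f T A σ Θ B θv) (Icc 0 T) t
      = -(R1f T A σ Θ B θv t * (A + Sgf σ * Pf T A σ Θ t) + Bᵀ * Pf T A σ Θ t) :=
    (hd.hasDerivWithinAt).derivWithin (uniqueDiffOn_Icc hT t ht)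
  rw [hdw, hR2_P T A σ Θ hΘ hT ht]
  show -(R1f T A σ Θ B θv t * (A + Sgf σ * Pf T A σ Θ t) + Bᵀ * Pf T A σ Θ t)
      + R1f T A σ Θ B θv t * (A + Sgf σ * Pf T A σ Θ t) + Bᵀ * Pf T A σ Θ t = 0
  abel


theorem matNormMulE {a b c : ℕ} (X : Matrix (Fin a) (Fin b) ℝ) (Y : Matrix (Fin b) (Fin c) ℝ) :
    ‖X * Y‖ ≤ b * ‖X‖ * ‖Y‖ := by
  refine (Matrix.norm_le_iff (by positivity)).mpr ?_
  intro i j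
  rw [Matrix.mul_apply]
  calc ‖∑ k, X i k * Y k j‖ ≤ ∑ k, ‖X i k * Y k j‖ := norm_sum_le _ _
    _ ≤ ∑ _k : Fin b, ‖X‖ * ‖Y‖ := by
        refine Finset.sum_le_sum fun k _ => ?_
        rw [norm_mul]
        exact mul_le_mul (Matrix.norm_entry_le_entrywise_sup_norm X)
          (Matrix.norm_entry_le_entrywise_sup_norm Y) (norm_nonneg _) (norm_nonneg _)
    _ = b * ‖X‖ * ‖Y‖ := by
        rw [Finset.sum_const, Finset.card_univ, Fintype.card_fin, nsmul_eq_mul]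
        ring

theorem mem_nhdsWithin_Ici_Icc {t : ℝ} (ht : t ∈ Ico 0 T) : Icc 0 T ∈ 𝓝[Ici t] t := by
  refine mem_nhdsWithin.mpr ⟨Iio T, isOpen_Iio, ht.2, ?_⟩
  rintro x ⟨hx1, hx2⟩
  exact ⟨le_trans ht.1 hx2, le_of_lt hx1⟩

theorem mem_nhdsWithin_Iic_Icc {t : ℝ} (ht : t ∈ Ioc 0 T) : Icc 0 T ∈ 𝓝[Iic t] t := by
  refine mem_nhdsWithin.mpr ⟨Ioi 0, isOpen_Ioi, ht.1, ?_⟩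
  rintro x ⟨hx1, hx2⟩
  exact ⟨le_of_lt hx1, le_trans hx2 ht.2⟩

theorem hR1_unique (hΘ : (-Θ).PosSemidef) (hT : 0 < T)
    (S₁ : ℝ → Matrix (Fin 1) (Fin n) ℝ)
    (h1 : ContDiffOn ℝ 1 S₁ (Icc 0 T))
    (h2 : ∀ t ∈ Icc 0 T, derivWithin S₁ (Icc 0 T) t
      + S₁ t * (A + (σ * σᵀ) * ((R2f T A σ Θ t)ᵀ + R2f T A σ Θ t))
      + Bᵀ * ((R2f T A σ Θ t)ᵀ + R2f T A σ Θ t) = 0)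
    (h3 : S₁ T = θv) : EqOn S₁ (R1f T A σ Θ B θv) (Icc 0 T) := by
  have hS₁d : ∀ t ∈ Icc 0 T, HasDerivWithinAt S₁ (derivWithin S₁ (Icc 0 T) t) (Icc 0 T) t :=
    fun t ht => ((h1.differentiableOn one_ne_zero) t ht).hasDerivWithinAt
  have hDS : ∀ t ∈ Icc 0 T, derivWithin S₁ (Icc 0 T) t
      = -(S₁ t * (A + Sgf σ * Pf T A σ Θ t) + Bᵀ * Pf T A σ Θ t) := by
    intro t ht
    have h := h2 t ht
    rw [hR2_P T A σ Θ hΘ hT ht, add_assoc] at h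
    exact eq_neg_of_add_eq_zero_left h
  set Z₁ := fun t => S₁ t * Xf T A σ Θ t - (θv + Jf T A Θ B t) with hZ₁def
  have hZ₁d : ∀ t ∈ Icc 0 T, HasDerivWithinAt Z₁ 0 (Icc 0 T) t := by
    intro t ht
    have h := ((hS₁d t ht).mmul (hX_deriv T A σ Θ t).hasDerivWithinAt).sub
      (((hJ_deriv T A Θ B t).const_add θv).hasDerivWithinAt)
    refine h.congr_deriv ?_
    symm
    rw [hDS t ht]
    set p := S₁ t
    set x := Xf T A σ Θ t
    set y := Yf T A Θ t
    set w := Wf T A σ Θ t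
    have hpx : Pf T A σ Θ t * x = y := by
      show Yf T A Θ t * Wf T A σ Θ t * x = y
      rw [Matrix.mul_assoc, hWX T A σ Θ (hX_unit T A σ Θ hΘ ht.2), Matrix.mul_one]
    rw [← hpx]
    rw [Matrix.neg_mul, Matrix.add_mul, Matrix.mul_add, Matrix.add_mul, Matrix.mul_add]
    simp only [Matrix.mul_assoc]
    abel
  have hZcont : ContinuousOn Z₁ (Icc 0 T) :=
    fun t ht => ((hZ₁d t ht).continuousWithinAt)
  have hconst := constant_of_has_deriv_right_zero hZcont
    (fun t ht => (hZ₁d t (Ico_subset_Icc_self ht)).mono_of_mem_nhdsWithin (mem_nhdsWithin_Ici_Icc T ht))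
  have hZT : Z₁ T = 0 := by
    rw [hZ₁def]
    simp only [h3, hX_T, hJ_T, Matrix.mul_one, add_zero, sub_self]
  have hZ0 : Z₁ 0 = 0 := by
    have := hconst T (right_mem_Icc.mpr hT.le)
    rw [hZT] at this
    exact this.symm
  intro t ht
  have hZt : Z₁ t = 0 := by rw [hconst t ht, hZ0]
  have hxw := hXW T A σ Θ (hX_unit T A σ Θ hΘ ht.2)
  have h4 : S₁ t * Xf T A σ Θ t = θv + Jf T A Θ B t := sub_eq_zero.mp hZt
  calc S₁ t = S₁ t * (Xf T A σ Θ t * Wf T A σ Θ t) := by rw [hxw, Matrix.mul_one]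
    _ = (S₁ t * Xf T A σ Θ t) * Wf T A σ Θ t := by rw [Matrix.mul_assoc]
    _ = (θv + Jf T A Θ B t) * Wf T A σ Θ t := by rw [h4]
    _ = R1f T A σ Θ B θv t := rfl


theorem hR2_unique (hΘ : (-Θ).PosSemidef) (hT : 0 < T)
    (S : ℝ → Matrix (Fin n) (Fin n) ℝ)
    (h1 : ContDiffOn ℝ 1 S (Icc 0 T))
    (h2 : ∀ t ∈ Icc 0 T, derivWithin S (Icc 0 T) t + ((S t)ᵀ + S t) * A
      + (1 / 2 : ℝ) • (((S t)ᵀ + S t) * (σ * σᵀ) * ((S t)ᵀ + S t)) = 0)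
    (h3 : S T = Θ) : EqOn S (R2f T A σ Θ) (Icc 0 T) := by
  set PS := fun u => (S u)ᵀ + S u with hPSdef
  have hSd : ∀ t ∈ Icc 0 T, HasDerivWithinAt S (derivWithin S (Icc 0 T) t) (Icc 0 T) t :=
    fun t ht => ((h1.differentiableOn one_ne_zero) t ht).hasDerivWithinAt
  have hDS : ∀ t ∈ Icc 0 T, derivWithin S (Icc 0 T) t
      = -(PS t * A + (1 / 2 : ℝ) • (PS t * Sgf σ * PS t)) := by
    intro t ht
    have h := h2 t ht
    rw [add_assoc] at h
    exact eq_neg_of_add_eq_zero_left h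
  have hPSsymm : ∀ u, (PS u)ᵀ = PS u := fun u => by
    simp only [hPSdef, Matrix.transpose_add, Matrix.transpose_transpose]
    exact add_comm _ _
  have hPSd : ∀ t ∈ Icc 0 T, HasDerivWithinAt PS
      ((derivWithin S (Icc 0 T) t)ᵀ + derivWithin S (Icc 0 T) t) (Icc 0 T) t :=
    fun t ht => ((hSd t ht).mtrans).add (hSd t ht)
  have hDStr : ∀ t ∈ Icc 0 T, (derivWithin S (Icc 0 T) t)ᵀ + derivWithin S (Icc 0 T) t
      = -(Aᵀ * PS t + PS t * A + PS t * Sgf σ * PS t) := by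
    intro t ht
    rw [hDS t ht]
    simp only [Matrix.transpose_neg, Matrix.transpose_add, Matrix.transpose_smul,
      Matrix.transpose_mul, hSg_symm, hPSsymm, Matrix.mul_assoc]
    module
  set Z := fun u => PS u * Xf T A σ Θ u - Yf T A Θ u with hZdef
  have hZd : ∀ t ∈ Icc 0 T,
      HasDerivWithinAt Z (-((Aᵀ + PS t * Sgf σ) * Z t)) (Icc 0 T) t := by
    intro t ht
    have h := ((hPSd t ht).mmul (hX_deriv T A σ Θ t).hasDerivWithinAt).sub
      (hY_deriv T A Θ t).hasDerivWithinAt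
    rw [hDStr t ht] at h
    refine h.congr_deriv ?_
    symm
    simp only [hZdef, Matrix.mul_sub, Matrix.sub_mul, Matrix.add_mul, Matrix.mul_add,
      Matrix.neg_mul, Matrix.mul_neg, Matrix.mul_assoc]
    abel
  have hPScont : ContinuousOn PS (Icc 0 T) :=
    (((trCLM n n).continuous.comp_continuousOn h1.continuousOn).add h1.continuousOn)
  obtain ⟨C, hC⟩ := (isCompact_Icc (a := (0:ℝ)) (b := T)).exists_bound_of_continuousOn
    (f := fun u => Aᵀ + PS u * Sgf σ)
    (continuousOn_const.add (contMulOnE hPScont continuousOn_const))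
  set K : NNReal := Real.toNNReal ((n : ℝ) * C) with hKdef
  set cl : ℝ → ℝ := fun u => max 0 (min u T) with hcldef
  have hcl : ∀ u, cl u ∈ Icc 0 T := fun u =>
    ⟨le_max_left _ _, max_le hT.le (min_le_right _ _)⟩
  set v : ℝ → Matrix (Fin n) (Fin n) ℝ → Matrix (Fin n) (Fin n) ℝ :=
    fun u z => -((Aᵀ + PS (cl u) * Sgf σ) * z) with hvdef
  have hv : ∀ u, LipschitzOnWith K (v u) univ := by
    intro u
    refine LipschitzOnWith.of_dist_le_mul fun z _ z' _ => ?_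
    rw [dist_eq_norm, dist_eq_norm]
    have he : v u z - v u z' = -((Aᵀ + PS (cl u) * Sgf σ) * (z - z')) := by
      simp only [hvdef, Matrix.mul_sub]
      abel
    rw [he, norm_neg]
    have hb := matNormMulE (Aᵀ + PS (cl u) * Sgf σ) (z - z')
    have hCu := hC _ (hcl u)
    have hn0 : (0:ℝ) ≤ (n:ℝ) := Nat.cast_nonneg n
    have hz0 : (0:ℝ) ≤ ‖z - z'‖ := norm_nonneg _
    have hK : (n:ℝ) * C ≤ (K : ℝ) := by
      rw [hKdef, Real.coe_toNNReal']
      exact le_max_left _ _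
    have hnorm0 : (0:ℝ) ≤ ‖Aᵀ + PS (cl u) * Sgf σ‖ := norm_nonneg _
    nlinarith [mul_le_mul_of_nonneg_right hCu hz0,
      mul_le_mul_of_nonneg_left (mul_le_mul_of_nonneg_right hCu hz0) hn0,
      mul_le_mul_of_nonneg_right hK hz0]
  have hZcont : ContinuousOn Z (Icc 0 T) := fun t ht => (hZd t ht).continuousWithinAt
  have hf' : ∀ t ∈ Ioc 0 T, HasDerivWithinAt Z (v t (Z t)) (Iic t) t := by
    intro t ht
    have h := (hZd t ⟨ht.1.le, ht.2⟩).mono_of_mem_nhdsWithin (mem_nhdsWithin_Iic_Icc T ht)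
    have hclt : cl t = t := by
      simp only [hcldef]
      rw [min_eq_left ht.2, max_eq_right ht.1.le]
    rw [hvdef]
    simp only [hclt]
    exact h
  have hg' : ∀ t ∈ Ioc 0 T,
      HasDerivWithinAt (fun _ : ℝ => (0 : Matrix (Fin n) (Fin n) ℝ))
        (v t ((fun _ : ℝ => (0 : Matrix (Fin n) (Fin n) ℝ)) t)) (Iic t) t := by
    intro t ht
    have : v t 0 = 0 := by simp [hvdef]
    rw [this]
    exact hasDerivWithinAt_const _ _ _
  have hbT : Z T = (fun _ : ℝ => (0 : Matrix (Fin n) (Fin n) ℝ)) T := by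
    simp only [hZdef, hX_T, hY_T, Matrix.mul_one, h3, Th2f, hPSdef, sub_self]
  have huniq : EqOn Z (fun _ : ℝ => (0 : Matrix (Fin n) (Fin n) ℝ)) (Icc 0 T) :=
    ODE_solution_unique_of_mem_Icc_left (fun t _ => hv t) hZcont hf'
      (fun t _ => mem_univ _) continuousOn_const hg' (fun t _ => mem_univ _) hbT
  have hPSP : ∀ t ∈ Icc 0 T, PS t = Pf T A σ Θ t := by
    intro t ht
    have hZt : Z t = 0 := huniq ht
    have h4 : PS t * Xf T A σ Θ t = Yf T A Θ t := sub_eq_zero.mp hZt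
    have hxw := hXW T A σ Θ (hX_unit T A σ Θ hΘ ht.2)
    calc PS t = PS t * (Xf T A σ Θ t * Wf T A σ Θ t) := by rw [hxw, Matrix.mul_one]
      _ = (PS t * Xf T A σ Θ t) * Wf T A σ Θ t := by rw [Matrix.mul_assoc]
      _ = Yf T A Θ t * Wf T A σ Θ t := by rw [h4]
      _ = Pf T A σ Θ t := rfl
  have hDd : ∀ t ∈ Icc 0 T,
      HasDerivWithinAt (fun u => S u - R2f T A σ Θ u) 0 (Icc 0 T) t := by
    intro t ht
    have hu : IsUnit (Xf T A σ Θ t) := hX_unit T A σ Θ hΘ ht.2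
    have hsub : uIcc t T ⊆ {u : ℝ | IsUnit (Xf T A σ Θ u)} := by
      rw [uIcc_of_le ht.2]
      exact fun x hx => hX_unit T A σ Θ hΘ hx.2
    have h := (hSd t ht).sub (hR2_deriv T A σ Θ hu hsub).hasDerivWithinAt
    rw [hDS t ht, hPSP t ht] at h
    refine h.congr_deriv ?_
    symm
    show (0 : Matrix (Fin n) (Fin n) ℝ)
      = -(Pf T A σ Θ t * A + (1 / 2 : ℝ) • (Pf T A σ Θ t * Sgf σ * Pf T A σ Θ t))
        - -gf T A σ Θ t
    simp only [gf]
    abel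
  have hDcont : ContinuousOn (fun u => S u - R2f T A σ Θ u) (Icc 0 T) :=
    fun t ht => (hDd t ht).continuousWithinAt
  have hconst := constant_of_has_deriv_right_zero hDcont
    (fun t ht => (hDd t (Ico_subset_Icc_self ht)).mono_of_mem_nhdsWithin (mem_nhdsWithin_Ici_Icc T ht))
  have hDT : S T - R2f T A σ Θ T = 0 := by rw [h3, hR2_T, sub_self]
  have hD0 : S 0 - R2f T A σ Θ 0 = 0 := by
    have := hconst T (right_mem_Icc.mpr hT.le)
    rw [hDT] at this
    exact this.symm
  intro t ht
  have := hconst t ht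
  rw [hD0] at this
  exact sub_eq_zero.mp this

end Main

end Statement2Aux

section FinalStatement

open Matrix Set

attribute [local instance] Matrix.normedAddCommGroup Matrix.normedSpace

/-- Existence and uniqueness on `[0,T]` of C¹ solutions `R₂ᴳ`, `R₁ᴳ` to the
Riccati-type terminal value problems associated with the futures price in the QPM.
Negative semidefiniteness of `Θ` is expressed as positive semidefiniteness of `-Θ`. -/
theorem statement2 (n : ℕ) (hn : 1 ≤ n) (T : ℝ) (hT : 0 < T)
    (A σ : Matrix (Fin n) (Fin n) ℝ) (B : Matrix (Fin n) (Fin 1) ℝ)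
    (θ : Matrix (Fin 1) (Fin n) ℝ)
    (Θ : Matrix (Fin n) (Fin n) ℝ) (hΘ : (-Θ).PosSemidef) :
    ∃ R₂ : ℝ → Matrix (Fin n) (Fin n) ℝ,
      (ContDiffOn ℝ 1 R₂ (Icc 0 T) ∧
        (∀ t ∈ Icc 0 T,
          derivWithin R₂ (Icc 0 T) t + ((R₂ t)ᵀ + R₂ t) * A
            + (1 / 2 : ℝ) • (((R₂ t)ᵀ + R₂ t) * (σ * σᵀ) * ((R₂ t)ᵀ + R₂ t)) = 0) ∧
        R₂ T = Θ) ∧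
      (∀ S : ℝ → Matrix (Fin n) (Fin n) ℝ,
        (ContDiffOn ℝ 1 S (Icc 0 T) ∧
          (∀ t ∈ Icc 0 T,
            derivWithin S (Icc 0 T) t + ((S t)ᵀ + S t) * A
              + (1 / 2 : ℝ) • (((S t)ᵀ + S t) * (σ * σᵀ) * ((S t)ᵀ + S t)) = 0) ∧
          S T = Θ) → EqOn S R₂ (Icc 0 T)) ∧
      ∃ R₁ : ℝ → Matrix (Fin 1) (Fin n) ℝ,
        (ContDiffOn ℝ 1 R₁ (Icc 0 T) ∧
          (∀ t ∈ Icc 0 T,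
            derivWithin R₁ (Icc 0 T) t
              + R₁ t * (A + (σ * σᵀ) * ((R₂ t)ᵀ + R₂ t))
              + Bᵀ * ((R₂ t)ᵀ + R₂ t) = 0) ∧
          R₁ T = θ) ∧
        (∀ S₁ : ℝ → Matrix (Fin 1) (Fin n) ℝ,
          (ContDiffOn ℝ 1 S₁ (Icc 0 T) ∧
            (∀ t ∈ Icc 0 T,
              derivWithin S₁ (Icc 0 T) t
                + S₁ t * (A + (σ * σᵀ) * ((R₂ t)ᵀ + R₂ t))
                + Bᵀ * ((R₂ t)ᵀ + R₂ t) = 0) ∧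
            S₁ T = θ) → EqOn S₁ R₁ (Icc 0 T)) := by
  refine ⟨R2f T A σ Θ, ⟨hR2_smooth T A σ Θ hΘ hT, hR2_ode T A σ Θ hΘ hT, hR2_T T A σ Θ⟩,
    ?_, ?_⟩
  · intro S hS
    exact hR2_unique T A σ Θ hΘ hT S hS.1 hS.2.1 hS.2.2
  · refine ⟨R1f T A σ Θ B θ,
      ⟨hR1_smooth T A σ Θ B θ hΘ hT, hR1_ode T A σ Θ B θ hΘ hT, hR1_T T A σ Θ B θ⟩, ?_⟩
    intro S₁ hS₁
    exact hR1_unique T A σ Θ B θ hΘ hT S₁ hS₁.1 hS₁.2.1 hS₁.2.2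

end FinalStatement
end

section
/- If Υ + Υᵀ is positive semidefinite and Θ + Θᵀ is negative semidefinite, then there exists a C¹ matrix-valued function R₂ : [0,T] → ℝ^{n×n} solving the nonsymmetric Riccati terminal value problem (NR) on the entire interval [0,T]. -/
/-! Auxiliary development for the Riccati terminal value problem.

We construct a solution of the symmetric Riccati equation via the Hamiltonian linear flow
(matrix exponential), working with the `L∞` operator norm on matrices, and export only
entrywise (instance-free) statements.  The main theorem is then proved using the
elementwise sup norm instances fixed in its statement. -/

namespace RiccatiAux

section Linfty

attribute [local instance] Matrix.linftyOpNormedRing Matrix.linftyOpNormedAlgebra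

open Matrix NormedSpace
open scoped NNReal

set_option linter.unusedSectionVars false

variable {ι : Type*} [Fintype ι] [DecidableEq ι]

theorem entry_nnnorm_le (M : Matrix ι ι ℝ) (a b : ι) : ‖M a b‖₊ ≤ ‖M‖₊ := by
  rw [Matrix.linfty_opNNNorm_def]
  refine le_trans ?_ (Finset.le_sup (Finset.mem_univ a))
  exact Finset.single_le_sum (f := fun j => ‖M a j‖₊) (fun _ _ => zero_le) (Finset.mem_univ b)

/-- the entry map as a continuous linear map (w.r.t. the `L∞` operator norm) -/
noncomputable def entryCLM (a b : ι) : Matrix ι ι ℝ →L[ℝ] ℝ :=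
  LinearMap.mkContinuous
    { toFun := fun M => M a b
      map_add' := fun _ _ => rfl
      map_smul' := fun _ _ => rfl } 1
    (fun M => by rw [one_mul]; exact NNReal.coe_le_coe.2 (entry_nnnorm_le M a b))

theorem hasDerivAt_entry {f : ℝ → Matrix ι ι ℝ} {f' : Matrix ι ι ℝ} {t : ℝ}
    (h : HasDerivAt f f' t) (a b : ι) :
    HasDerivAt (fun s => f s a b) (f' a b) t :=
  ((entryCLM a b).hasFDerivAt.comp_hasDerivAt t h :)

theorem toBlocks₁₁_nnnorm_le (M : Matrix (ι ⊕ ι) (ι ⊕ ι) ℝ) : ‖M.toBlocks₁₁‖₊ ≤ ‖M‖₊ := by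
  rw [Matrix.linfty_opNNNorm_def, Matrix.linfty_opNNNorm_def]
  refine Finset.sup_le fun i _ => le_trans ?_ (Finset.le_sup (Finset.mem_univ (Sum.inl i)))
  rw [Fintype.sum_sum_type]
  exact le_add_of_le_of_nonneg le_rfl zero_le

theorem toBlocks₂₁_nnnorm_le (M : Matrix (ι ⊕ ι) (ι ⊕ ι) ℝ) : ‖M.toBlocks₂₁‖₊ ≤ ‖M‖₊ := by
  rw [Matrix.linfty_opNNNorm_def, Matrix.linfty_opNNNorm_def]
  refine Finset.sup_le fun i _ => le_trans ?_ (Finset.le_sup (Finset.mem_univ (Sum.inr i)))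
  rw [Fintype.sum_sum_type]
  exact le_add_of_le_of_nonneg le_rfl zero_le

noncomputable def blk11CLM : Matrix (ι ⊕ ι) (ι ⊕ ι) ℝ →L[ℝ] Matrix ι ι ℝ :=
  LinearMap.mkContinuous
    { toFun := fun M => M.toBlocks₁₁
      map_add' := fun _ _ => rfl
      map_smul' := fun _ _ => rfl } 1
    (fun M => by rw [one_mul]; exact NNReal.coe_le_coe.2 (toBlocks₁₁_nnnorm_le M))

noncomputable def blk21CLM : Matrix (ι ⊕ ι) (ι ⊕ ι) ℝ →L[ℝ] Matrix ι ι ℝ :=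
  LinearMap.mkContinuous
    { toFun := fun M => M.toBlocks₂₁
      map_add' := fun _ _ => rfl
      map_smul' := fun _ _ => rfl } 1
    (fun M => by rw [one_mul]; exact NNReal.coe_le_coe.2 (toBlocks₂₁_nnnorm_le M))

@[simp] theorem blk11CLM_apply (M : Matrix (ι ⊕ ι) (ι ⊕ ι) ℝ) : blk11CLM M = M.toBlocks₁₁ := rfl
@[simp] theorem blk21CLM_apply (M : Matrix (ι ⊕ ι) (ι ⊕ ι) ℝ) : blk21CLM M = M.toBlocks₂₁ := rfl

theorem transpose_nnnorm_le (M : Matrix ι ι ℝ) :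
    ‖Mᵀ‖₊ ≤ (Fintype.card ι) * ‖M‖₊ := by
  rw [Matrix.linfty_opNNNorm_def]
  refine Finset.sup_le fun j _ => ?_
  calc ∑ i, ‖Mᵀ j i‖₊ ≤ ∑ _i : ι, ‖M‖₊ :=
        Finset.sum_le_sum fun i _ => entry_nnnorm_le M i j
    _ = (Fintype.card ι) * ‖M‖₊ := by simp [Finset.sum_const, mul_comm]

noncomputable def transposeCLM : Matrix ι ι ℝ →L[ℝ] Matrix ι ι ℝ :=
  LinearMap.mkContinuous
    { toFun := fun M => Mᵀ
      map_add' := fun _ _ => rfl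
      map_smul' := fun _ _ => rfl } (Fintype.card ι)
    (fun M => by
      have := transpose_nnnorm_le M
      have h : ‖Mᵀ‖ ≤ (Fintype.card ι : ℝ≥0) * ‖M‖ := by exact_mod_cast this
      exact (by simpa using h : ‖Mᵀ‖ ≤ (Fintype.card ι : ℝ) * ‖M‖))

theorem hasDerivAt_transpose {f : ℝ → Matrix ι ι ℝ} {f' : Matrix ι ι ℝ} {t : ℝ}
    (h : HasDerivAt f f' t) : HasDerivAt (fun s => (f s)ᵀ) f'ᵀ t :=
  (transposeCLM.hasFDerivAt.comp_hasDerivAt t h :)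

theorem hasDerivAt_mulVec {f : ℝ → Matrix ι ι ℝ} {f' : Matrix ι ι ℝ} {t : ℝ}
    (h : HasDerivAt f f' t) (v : ι → ℝ) :
    HasDerivAt (fun s => f s *ᵥ v) (f' *ᵥ v) t := by
  rw [hasDerivAt_pi]
  intro i
  simp only [Matrix.mulVec, dotProduct]
  exact HasDerivAt.fun_sum (fun j _ => (hasDerivAt_entry h i j).mul_const (v j))

theorem hasDerivAt_dot {f g : ℝ → ι → ℝ} {f' g' : ι → ℝ} {t : ℝ}
    (hf : HasDerivAt f f' t) (hg : HasDerivAt g g' t) :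
    HasDerivAt (fun s => f s ⬝ᵥ g s) (f' ⬝ᵥ g t + f t ⬝ᵥ g') t := by
  simp only [dotProduct]
  rw [← Finset.sum_add_distrib]
  exact HasDerivAt.fun_sum fun i _ =>
    ((hasDerivAt_pi.1 hf i).mul (hasDerivAt_pi.1 hg i))

theorem dot_self_nonneg (w : ι → ℝ) : 0 ≤ w ⬝ᵥ w :=
  Finset.sum_nonneg fun i _ => mul_self_nonneg (w i)

theorem eq_zero_of_dot_self (w : ι → ℝ) (h : w ⬝ᵥ w = 0) : w = 0 := by
  funext i
  have := (Finset.sum_eq_zero_iff_of_nonneg (fun i _ => mul_self_nonneg (w i))).1 h i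
    (Finset.mem_univ i)
  simpa [mul_self_eq_zero] using this

theorem dot_sigma (y : ι → ℝ) (σ : Matrix ι ι ℝ) :
    y ⬝ᵥ ((σ * σᵀ) *ᵥ y) = (σᵀ *ᵥ y) ⬝ᵥ (σᵀ *ᵥ y) := by
  rw [← Matrix.mulVec_mulVec, Matrix.dotProduct_mulVec, ← Matrix.mulVec_transpose]

/-- Key invertibility lemma: the top block of the Hamiltonian flow stays invertible
for nonnegative times. -/
theorem isUnit_X_key (A σ Q N0 : Matrix ι ι ℝ)
    (hQ : Q.PosSemidef) (hN0 : N0.PosSemidef)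
    (X Y : ℝ → Matrix ι ι ℝ)
    (hX : ∀ t, HasDerivAt X (-A * X t + (σ * σᵀ) * Y t) t)
    (hY : ∀ t, HasDerivAt Y (Q * X t + Aᵀ * Y t) t)
    (hX0 : X 0 = 1) (hY0 : Y 0 = N0)
    (t₁ : ℝ) (ht : 0 ≤ t₁) : IsUnit (X t₁) := by
  rw [Matrix.isUnit_iff_isUnit_det, isUnit_iff_ne_zero]
  intro hdet
  obtain ⟨v, hv, hXv⟩ := Matrix.exists_mulVec_eq_zero_iff.2 hdet
  set x : ℝ → ι → ℝ := fun t => X t *ᵥ v with hxdef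
  set y : ℝ → ι → ℝ := fun t => Y t *ᵥ v with hydef
  have hx : ∀ t, HasDerivAt x (-(A *ᵥ x t) + (σ * σᵀ) *ᵥ y t) t := by
    intro t
    have := hasDerivAt_mulVec (hX t) v
    simpa [Matrix.add_mulVec, Matrix.neg_mulVec, ← Matrix.mulVec_mulVec] using this
  have hy : ∀ t, HasDerivAt y ((Q *ᵥ x t) + Aᵀ *ᵥ y t) t := by
    intro t
    have := hasDerivAt_mulVec (hY t) v
    simpa [Matrix.add_mulVec, ← Matrix.mulVec_mulVec] using this
  set φ : ℝ → ℝ := fun t => x t ⬝ᵥ y t with hφdef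
  have hφ : ∀ t, HasDerivAt φ
      ((σᵀ *ᵥ y t) ⬝ᵥ (σᵀ *ᵥ y t) + x t ⬝ᵥ (Q *ᵥ x t)) t := by
    intro t
    have h := hasDerivAt_dot (hx t) (hy t)
    have e : (-(A *ᵥ x t) + (σ * σᵀ) *ᵥ y t) ⬝ᵥ y t + x t ⬝ᵥ (Q *ᵥ x t + Aᵀ *ᵥ y t)
        = (σᵀ *ᵥ y t) ⬝ᵥ (σᵀ *ᵥ y t) + x t ⬝ᵥ (Q *ᵥ x t) := by
      rw [add_dotProduct, dotProduct_add, neg_dotProduct]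
      have e1 : x t ⬝ᵥ (Aᵀ *ᵥ y t) = (A *ᵥ x t) ⬝ᵥ y t := by
        rw [Matrix.dotProduct_mulVec, Matrix.vecMul_transpose]
      have e2 : ((σ * σᵀ) *ᵥ y t) ⬝ᵥ y t = (σᵀ *ᵥ y t) ⬝ᵥ (σᵀ *ᵥ y t) := by
        rw [dotProduct_comm, dot_sigma]
      rw [e1, e2]; ring
    rw [← e]; exact h
  have hφ' : ∀ t, 0 ≤ (σᵀ *ᵥ y t) ⬝ᵥ (σᵀ *ᵥ y t) + x t ⬝ᵥ (Q *ᵥ x t) := by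
    intro t
    have h1 := dot_self_nonneg (σᵀ *ᵥ y t)
    have h2 := hQ.dotProduct_mulVec_nonneg (x t)
    simp only [star_trivial] at h2
    linarith
  have hmono : Monotone φ :=
    monotone_of_deriv_nonneg (fun t => (hφ t).differentiableAt)
      (fun t => by rw [(hφ t).deriv]; exact hφ' t)
  have hφt₁ : φ t₁ = 0 := by simp [hφdef, hxdef, hXv]
  have hφ0 : 0 ≤ φ 0 := by
    have := hN0.dotProduct_mulVec_nonneg v
    simpa [hφdef, hxdef, hydef, hX0, hY0, Matrix.one_mulVec, star_trivial] using this
  have hφzero : ∀ t ∈ Set.Icc 0 t₁, φ t = 0 := fun t htt =>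
    le_antisymm (hφt₁ ▸ hmono htt.2) (le_trans hφ0 (hmono htt.1))
  rcases eq_or_lt_of_le ht with h0 | h0
  · apply hv
    have : x t₁ = v := by simp [hxdef, ← h0, hX0, Matrix.one_mulVec]
    rw [← this]; exact hXv
  have hBy : ∀ u ∈ Set.Icc 0 t₁, (σ * σᵀ) *ᵥ y u = 0 := by
    have hyc : Continuous y := continuous_iff_continuousAt.2 fun t => (hy t).continuousAt
    have hcont : Continuous fun u => (σ * σᵀ) *ᵥ y u := by
      apply continuous_pi
      intro i
      simp only [Matrix.mulVec, dotProduct]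
      exact continuous_finset_sum _ fun j _ =>
        (continuous_const.mul ((continuous_apply j).comp hyc))
    have hIoo : ∀ u ∈ Set.Ioo 0 t₁, (σ * σᵀ) *ᵥ y u = 0 := by
      intro u hu
      have hev : φ =ᶠ[nhds u] fun _ => 0 := by
        filter_upwards [Icc_mem_nhds hu.1 hu.2] with s hs
        exact hφzero s hs
      have hderiv0 : deriv φ u = 0 := by
        rw [hev.deriv_eq]; simp
      rw [(hφ u).deriv] at hderiv0
      have h2 : x u ⬝ᵥ (Q *ᵥ x u) = 0 ∧ (σᵀ *ᵥ y u) ⬝ᵥ (σᵀ *ᵥ y u) = 0 := by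
        have ha := dot_self_nonneg (σᵀ *ᵥ y u)
        have hb := hQ.dotProduct_mulVec_nonneg (x u)
        simp only [star_trivial] at hb
        constructor <;> linarith
      have := eq_zero_of_dot_self _ h2.2
      rw [← Matrix.mulVec_mulVec, this, Matrix.mulVec_zero]
    have hcl := (Set.EqOn.closure (fun u hu => hIoo u hu) hcont continuous_const)
    rw [closure_Ioo (ne_of_lt h0)] at hcl
    exact fun u hu => hcl hu
  set f : ℝ → ι → ℝ := fun s => x (t₁ - s) with hfdef
  set L : (ι → ℝ) →L[ℝ] (ι → ℝ) := LinearMap.toContinuousLinearMap (Matrix.mulVecLin A)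
    with hLdef
  have hLapp : ∀ w, L w = A *ᵥ w := fun w => rfl
  have hlip : ∀ s : ℝ, LipschitzWith ‖L‖₊ (fun w : ι → ℝ => A *ᵥ w) := by
    intro s
    have := L.lipschitz
    simpa [funext hLapp] using this
  have hf' : ∀ s ∈ Set.Ico 0 t₁, HasDerivAt f (A *ᵥ f s) s := by
    intro s hs
    have hsub : HasDerivAt (fun u : ℝ => t₁ - u) (-1) s := by
      simpa using ((hasDerivAt_id s).const_sub t₁)
    have hcomp := (hx (t₁ - s)).scomp s hsub
    have hmem : t₁ - s ∈ Set.Icc 0 t₁ :=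
      ⟨by linarith [hs.2], by linarith [hs.1]⟩
    have : (-1 : ℝ) • (-(A *ᵥ x (t₁ - s)) + (σ * σᵀ) *ᵥ y (t₁ - s)) = A *ᵥ f s := by
      rw [hBy _ hmem]
      simp [hfdef]
    rwa [this] at hcomp
  have huniq := ODE_solution_unique (v := fun _ w => A *ᵥ w) (f := f) (g := fun _ => 0)
    hlip
    (fun s hs => ((hx (t₁ - s)).scomp s (by simpa using ((hasDerivAt_id s).const_sub t₁)) :
        HasDerivAt f _ s).continuousAt.continuousWithinAt)
    (fun s hs => (hf' s hs).hasDerivWithinAt)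
    continuousOn_const
    (fun s hs => by
      simpa [Matrix.mulVec_zero] using (hasDerivAt_const s (0 : ι → ℝ)).hasDerivWithinAt)
    (by simp [hfdef, hXv, hxdef])
  have hft : f t₁ = 0 := huniq ⟨ht, le_refl t₁⟩
  apply hv
  simpa [hfdef, hxdef, hX0, Matrix.one_mulVec] using hft

theorem hasDerivAt_ring_inverse_comp {X : ℝ → Matrix ι ι ℝ} {X' : Matrix ι ι ℝ} {t : ℝ}
    (hX : HasDerivAt X X' t) (hu : IsUnit (X t)) :
    HasDerivAt (fun s => Ring.inverse (X s))
      (-(Ring.inverse (X t) * X' * Ring.inverse (X t))) t := by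
  obtain ⟨u, hu'⟩ := hu
  have h1 := hasFDerivAt_ringInverse (𝕜 := ℝ) u
  rw [hu'] at h1
  have h2 := h1.comp_hasDerivAt t hX
  have e : (-ContinuousLinearMap.mulLeftRight ℝ (Matrix ι ι ℝ) ↑u⁻¹ ↑u⁻¹) X'
      = -(Ring.inverse (X t) * X' * Ring.inverse (X t)) := by
    simp [ContinuousLinearMap.mulLeftRight_apply, ← hu', Ring.inverse_unit]
  rwa [e] at h2

theorem hasDerivAt_YXinv {X Y : ℝ → Matrix ι ι ℝ} {X' Y' : Matrix ι ι ℝ} {t : ℝ}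
    (hX : HasDerivAt X X' t) (hY : HasDerivAt Y Y' t) (hu : IsUnit (X t)) :
    HasDerivAt (fun s => Y s * Ring.inverse (X s))
      (Y' * Ring.inverse (X t)
        - (Y t * Ring.inverse (X t)) * X' * Ring.inverse (X t)) t := by
  have h := hY.mul (hasDerivAt_ring_inverse_comp hX hu)
  have e : Y' * Ring.inverse (X t) + Y t * -(Ring.inverse (X t) * X' * Ring.inverse (X t))
      = Y' * Ring.inverse (X t)
        - (Y t * Ring.inverse (X t)) * X' * Ring.inverse (X t) := by
    noncomm_ring
  rwa [e] at h

theorem hasDerivAt_N_riccati (A σ Q : Matrix ι ι ℝ) {X Y : ℝ → Matrix ι ι ℝ} {t : ℝ}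
    (hX : HasDerivAt X (-A * X t + (σ * σᵀ) * Y t) t)
    (hY : HasDerivAt Y (Q * X t + Aᵀ * Y t) t)
    (hu : IsUnit (X t)) :
    HasDerivAt (fun s => Y s * Ring.inverse (X s))
      (Q + Aᵀ * (Y t * Ring.inverse (X t)) + (Y t * Ring.inverse (X t)) * A
        - (Y t * Ring.inverse (X t)) * (σ * σᵀ) * (Y t * Ring.inverse (X t))) t := by
  have h := hasDerivAt_YXinv hX hY hu
  set W := Ring.inverse (X t) with hW
  have hXW : X t * W = 1 := Ring.mul_inverse_cancel _ hu
  have e : (Q * X t + Aᵀ * Y t) * W - (Y t * W) * (-A * X t + (σ * σᵀ) * Y t) * W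
      = Q + Aᵀ * (Y t * W) + (Y t * W) * A - (Y t * W) * (σ * σᵀ) * (Y t * W) := by
    simp only [add_mul, sub_mul, neg_mul, mul_neg, mul_add, neg_add, mul_one, mul_assoc, hXW]
    abel
  rwa [e] at h

theorem XtY_symm_key (A σ Q N0 : Matrix ι ι ℝ)
    (hQsym : Qᵀ = Q) (hN0sym : N0ᵀ = N0)
    (X Y : ℝ → Matrix ι ι ℝ)
    (hX : ∀ t, HasDerivAt X (-A * X t + (σ * σᵀ) * Y t) t)
    (hY : ∀ t, HasDerivAt Y (Q * X t + Aᵀ * Y t) t)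
    (hX0 : X 0 = 1) (hY0 : Y 0 = N0) :
    ∀ t, (X t)ᵀ * Y t = (Y t)ᵀ * X t := by
  set D : ℝ → Matrix ι ι ℝ := fun t => (X t)ᵀ * Y t - (Y t)ᵀ * X t with hDdef
  have hD : ∀ t, HasDerivAt D 0 t := by
    intro t
    have h := ((hasDerivAt_transpose (hX t)).mul (hY t)).sub
      ((hasDerivAt_transpose (hY t)).mul (hX t))
    have e : ((-A * X t + (σ * σᵀ) * Y t)ᵀ * Y t + (X t)ᵀ * (Q * X t + Aᵀ * Y t))
        - ((Q * X t + Aᵀ * Y t)ᵀ * X t + (Y t)ᵀ * (-A * X t + (σ * σᵀ) * Y t)) = 0 := by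
      simp only [transpose_add, transpose_mul, transpose_neg, transpose_transpose, hQsym]
      noncomm_ring
    rwa [e] at h
  have hconst : ∀ t, D t = D 0 := by
    intro t
    exact is_const_of_deriv_eq_zero (fun s => (hD s).differentiableAt) (fun s => (hD s).deriv) t 0
  have hD0 : D 0 = 0 := by
    simp [hDdef, hX0, hY0, hN0sym]
  intro t
  have := hconst t
  rw [hD0] at this
  exact sub_eq_zero.1 this

theorem N_transpose_key {X Y : Matrix ι ι ℝ}
    (hs : Xᵀ * Y = Yᵀ * X) (hu : IsUnit X) :
    (Y * Ring.inverse X)ᵀ = Y * Ring.inverse X := by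
  set W := Ring.inverse X with hW
  have hXW : X * W = 1 := Ring.mul_inverse_cancel _ hu
  have hYt : Yᵀ = Xᵀ * (Y * W) := by
    calc Yᵀ = Yᵀ * (X * W) := by rw [hXW, mul_one]
    _ = (Yᵀ * X) * W := by rw [mul_assoc]
    _ = (Xᵀ * Y) * W := by rw [hs]
    _ = Xᵀ * (Y * W) := by rw [mul_assoc]
  have hWtXt : Wᵀ * Xᵀ = 1 := by
    rw [← transpose_mul, hXW, transpose_one]
  calc (Y * W)ᵀ = Wᵀ * Yᵀ := by rw [transpose_mul]
    _ = Wᵀ * (Xᵀ * (Y * W)) := by rw [← hYt]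
    _ = (Wᵀ * Xᵀ) * (Y * W) := by rw [mul_assoc]
    _ = Y * W := by rw [hWtXt, one_mul]

variable {n : ℕ}

/-- The Hamiltonian matrix. -/
noncomputable def Ham (A σ Υ : Matrix (Fin n) (Fin n) ℝ) :
    Matrix (Fin n ⊕ Fin n) (Fin n ⊕ Fin n) ℝ :=
  fromBlocks (-A) (σ * σᵀ) (Υ + Υᵀ) Aᵀ

/-- The Hamiltonian flow applied to the initial data `(1, -(Θ + Θᵀ))`. -/
noncomputable def Zf (A σ Υ Θ : Matrix (Fin n) (Fin n) ℝ) (t : ℝ) :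
    Matrix (Fin n ⊕ Fin n) (Fin n ⊕ Fin n) ℝ :=
  exp (t • Ham A σ Υ) * fromBlocks 1 0 (-(Θ + Θᵀ)) 0

variable (A σ Υ Θ : Matrix (Fin n) (Fin n) ℝ)

noncomputable def Xf (t : ℝ) : Matrix (Fin n) (Fin n) ℝ := (Zf A σ Υ Θ t).toBlocks₁₁
noncomputable def Yf (t : ℝ) : Matrix (Fin n) (Fin n) ℝ := (Zf A σ Υ Θ t).toBlocks₂₁

/-- The solution of the (forward-time) symmetric matrix Riccati equation. -/
noncomputable def Nf (t : ℝ) : Matrix (Fin n) (Fin n) ℝ :=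
  Yf A σ Υ Θ t * Ring.inverse (Xf A σ Υ Θ t)

theorem hasDerivAt_Zf (t : ℝ) :
    HasDerivAt (Zf A σ Υ Θ) (Ham A σ Υ * Zf A σ Υ Θ t) t := by
  have h := (hasDerivAt_exp_smul_const' (𝕂 := ℝ) (Ham A σ Υ) t).mul_const
    (fromBlocks 1 0 (-(Θ + Θᵀ)) 0)
  have h2 : HasDerivAt (fun u => Zf A σ Υ Θ u)
      (Ham A σ Υ * Zf A σ Υ Θ t) t := by
    simp only [Zf, mul_assoc] at h ⊢; exact h
  exact h2

theorem Ham_mul_toBlocks₁₁ (M : Matrix (Fin n ⊕ Fin n) (Fin n ⊕ Fin n) ℝ) :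
    (Ham A σ Υ * M).toBlocks₁₁ = -A * M.toBlocks₁₁ + (σ * σᵀ) * M.toBlocks₂₁ := by
  conv_lhs => rw [← fromBlocks_toBlocks M]
  rw [Ham, fromBlocks_multiply, toBlocks_fromBlocks₁₁]

theorem Ham_mul_toBlocks₂₁ (M : Matrix (Fin n ⊕ Fin n) (Fin n ⊕ Fin n) ℝ) :
    (Ham A σ Υ * M).toBlocks₂₁ = (Υ + Υᵀ) * M.toBlocks₁₁ + Aᵀ * M.toBlocks₂₁ := by
  conv_lhs => rw [← fromBlocks_toBlocks M]
  rw [Ham, fromBlocks_multiply, toBlocks_fromBlocks₂₁]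

theorem hasDerivAt_Xf (t : ℝ) :
    HasDerivAt (Xf A σ Υ Θ) (-A * Xf A σ Υ Θ t + (σ * σᵀ) * Yf A σ Υ Θ t) t := by
  have h := blk11CLM.hasFDerivAt.comp_hasDerivAt t (hasDerivAt_Zf A σ Υ Θ t)
  rw [show -A * Xf A σ Υ Θ t + (σ * σᵀ) * Yf A σ Υ Θ t = blk11CLM (Ham A σ Υ * Zf A σ Υ Θ t) from
    (Ham_mul_toBlocks₁₁ A σ Υ _).symm]; exact h

theorem hasDerivAt_Yf (t : ℝ) :
    HasDerivAt (Yf A σ Υ Θ) ((Υ + Υᵀ) * Xf A σ Υ Θ t + Aᵀ * Yf A σ Υ Θ t) t := by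
  have h := blk21CLM.hasFDerivAt.comp_hasDerivAt t (hasDerivAt_Zf A σ Υ Θ t)
  rw [show (Υ + Υᵀ) * Xf A σ Υ Θ t + Aᵀ * Yf A σ Υ Θ t = blk21CLM (Ham A σ Υ * Zf A σ Υ Θ t) from
    (Ham_mul_toBlocks₂₁ A σ Υ _).symm]; exact h

@[simp] theorem Zf_zero : Zf A σ Υ Θ 0 = fromBlocks 1 0 (-(Θ + Θᵀ)) 0 := by
  simp [Zf]

@[simp] theorem Xf_zero : Xf A σ Υ Θ 0 = 1 := by simp [Xf, toBlocks_fromBlocks₁₁]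
@[simp] theorem Yf_zero : Yf A σ Υ Θ 0 = -(Θ + Θᵀ) := by simp [Yf, toBlocks_fromBlocks₂₁]

variable (hΥ : (Υ + Υᵀ).PosSemidef) (hΘ : (-(Θ + Θᵀ)).PosSemidef)

include hΥ hΘ in
theorem isUnit_Xf (t : ℝ) (ht : 0 ≤ t) : IsUnit (Xf A σ Υ Θ t) :=
  isUnit_X_key A σ (Υ + Υᵀ) (-(Θ + Θᵀ)) hΥ hΘ _ _
    (hasDerivAt_Xf A σ Υ Θ) (hasDerivAt_Yf A σ Υ Θ)
    (Xf_zero A σ Υ Θ) (Yf_zero A σ Υ Θ) t ht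

include hΥ hΘ in
/-- Entrywise (norm-independent) statement of the Riccati differential equation for `Nf`. -/
theorem Nf_entry_deriv (t : ℝ) (ht : 0 ≤ t) (i j : Fin n) :
    HasDerivAt (fun s => Nf A σ Υ Θ s i j)
      (((Υ + Υᵀ) + Aᵀ * Nf A σ Υ Θ t + Nf A σ Υ Θ t * A
        - Nf A σ Υ Θ t * (σ * σᵀ) * Nf A σ Υ Θ t) i j) t := by
  have h := hasDerivAt_N_riccati A σ (Υ + Υᵀ)
    (hasDerivAt_Xf A σ Υ Θ t) (hasDerivAt_Yf A σ Υ Θ t) (isUnit_Xf A σ Υ Θ hΥ hΘ t ht)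
  exact hasDerivAt_entry h i j

include hΥ hΘ in
theorem Nf_sym (t : ℝ) (ht : 0 ≤ t) : (Nf A σ Υ Θ t)ᵀ = Nf A σ Υ Θ t := by
  have hQsym : (Υ + Υᵀ)ᵀ = Υ + Υᵀ := by
    rw [transpose_add, transpose_transpose, add_comm]
  have hN0sym : (-(Θ + Θᵀ))ᵀ = -(Θ + Θᵀ) := by
    rw [transpose_neg, transpose_add, transpose_transpose, add_comm]
  have hs := XtY_symm_key A σ (Υ + Υᵀ) (-(Θ + Θᵀ)) hQsym hN0sym _ _
    (hasDerivAt_Xf A σ Υ Θ) (hasDerivAt_Yf A σ Υ Θ)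
    (Xf_zero A σ Υ Θ) (Yf_zero A σ Υ Θ) t
  exact N_transpose_key hs (isUnit_Xf A σ Υ Θ hΥ hΘ t ht)

theorem Nf_zero : Nf A σ Υ Θ 0 = -(Θ + Θᵀ) := by
  simp [Nf, Ring.inverse_one]

end Linfty

end RiccatiAux


open Matrix Set

attribute [local instance] Matrix.normedAddCommGroup Matrix.normedSpace

section SupHelpers

theorem matrix_hasDerivAt {n : ℕ} {f : ℝ → Matrix (Fin n) (Fin n) ℝ}
    {f' : Matrix (Fin n) (Fin n) ℝ} {t : ℝ}
    (h : ∀ i j, HasDerivAt (fun s => f s i j) (f' i j) t) :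
    HasDerivAt f f' t := by
  refine hasDerivAt_pi.2 ?_
  intro i
  rw [hasDerivAt_pi]
  intro j
  exact h i j

theorem matrix_continuous {n : ℕ} {f : ℝ → Matrix (Fin n) (Fin n) ℝ}
    (h : ∀ i j, Continuous (fun u => f u i j)) : Continuous f := by
  apply continuous_pi; intro i; apply continuous_pi; intro j; exact h i j

theorem g_add_transpose {n : ℕ} (Υ A B S : Matrix (Fin n) (Fin n) ℝ)
    (hS : Sᵀ = S) (hB : Bᵀ = B) :
    (Υ - S * A - (1 / 2 : ℝ) • (S * B * S)) + (Υ - S * A - (1 / 2 : ℝ) • (S * B * S))ᵀ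
      = (Υ + Υᵀ) - Aᵀ * S - S * A - S * B * S := by
  have h2 : (1 / 2 : ℝ) • (S * B * S) + (1 / 2 : ℝ) • (S * B * S) = S * B * S := by
    rw [← add_smul]; norm_num
  rw [transpose_sub, transpose_sub, transpose_smul, transpose_mul, transpose_mul,
    transpose_mul, hS, hB, ← mul_assoc, ← h2]
  module

theorem neg_subst {n : ℕ} (Q A B S : Matrix (Fin n) (Fin n) ℝ) :
    Q + Aᵀ * (-S) + (-S) * A - (-S) * B * (-S) = Q - Aᵀ * S - S * A - S * B * S := by
  simp only [mul_neg, neg_mul, neg_neg]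
  abel

end SupHelpers

/-- If `Υ + Υᵀ` is positive semidefinite and `Θ + Θᵀ` is negative semidefinite
(expressed as `-(Θ + Θᵀ)` positive semidefinite), then the nonsymmetric Riccati terminal
value problem (NR) has a C¹ solution on all of `[0,T]`. -/
theorem statement4 (n : ℕ) (hn : 1 ≤ n) (T : ℝ) (hT : 0 < T)
    (A σ Υ Θ : Matrix (Fin n) (Fin n) ℝ)
    (hΥ : (Υ + Υᵀ).PosSemidef) (hΘ : (-(Θ + Θᵀ)).PosSemidef) :
    ∃ R₂ : ℝ → Matrix (Fin n) (Fin n) ℝ,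
      ContDiffOn ℝ 1 R₂ (Icc 0 T) ∧
      (∀ t ∈ Icc 0 T,
        derivWithin R₂ (Icc 0 T) t + ((R₂ t)ᵀ + R₂ t) * A
          + (1 / 2 : ℝ) • (((R₂ t)ᵀ + R₂ t) * (σ * σᵀ) * ((R₂ t)ᵀ + R₂ t)) - Υ = 0) ∧
      R₂ T = Θ := by
  classical
  set NN : ℝ → Matrix (Fin n) (Fin n) ℝ := RiccatiAux.Nf A σ Υ Θ with hNN
  set S : ℝ → Matrix (Fin n) (Fin n) ℝ := fun u => -(NN (T - u)) with hSdef
  set g : ℝ → Matrix (Fin n) (Fin n) ℝ :=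
    fun u => Υ - S u * A - (1 / 2 : ℝ) • (S u * (σ * σᵀ) * S u) with hgdef
  set c : ℝ → ℝ := fun s => max 0 (min s T) with hcdef
  set G : ℝ → Matrix (Fin n) (Fin n) ℝ := fun s => g (c s) with hGdef
  have hcmem : ∀ s, c s ∈ Icc 0 T :=
    fun s => ⟨le_max_left _ _, max_le hT.le (min_le_right _ _)⟩
  have hceq : ∀ s ∈ Icc (0 : ℝ) T, c s = s := by
    intro s hs
    simp [hcdef, min_eq_left hs.2, max_eq_right hs.1]
  have hccont : Continuous c := continuous_const.max (continuous_id.min continuous_const)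
  have hNd : ∀ v : ℝ, 0 ≤ v → ∀ i j, HasDerivAt (fun s => NN s i j)
      (((Υ + Υᵀ) + Aᵀ * NN v + NN v * A - NN v * (σ * σᵀ) * NN v) i j) v :=
    fun v hv i j => RiccatiAux.Nf_entry_deriv A σ Υ Θ hΥ hΘ v hv i j
  have hNsym : ∀ v : ℝ, 0 ≤ v → (NN v)ᵀ = NN v :=
    fun v hv => RiccatiAux.Nf_sym A σ Υ Θ hΥ hΘ v hv
  have hN0 : NN 0 = -(Θ + Θᵀ) := RiccatiAux.Nf_zero A σ Υ Θ
  have hSsym : ∀ u ∈ Icc (0:ℝ) T, (S u)ᵀ = S u := by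
    intro u hu
    have := hNsym (T - u) (by linarith [hu.2])
    simp [hSdef, Matrix.transpose_neg, this]
  have hSd : ∀ u ∈ Icc (0:ℝ) T, ∀ i j, HasDerivAt (fun w => S w i j)
      (((Υ + Υᵀ) - Aᵀ * S u - S u * A - S u * (σ * σᵀ) * S u) i j) u := by
    intro u hu i j
    have h0 : (0:ℝ) ≤ T - u := by linarith [hu.2]
    have hE := hNd (T - u) h0 i j
    have hsub : HasDerivAt (fun w : ℝ => T - w) (-1 : ℝ) u := by
      simpa using (hasDerivAt_id u).const_sub T
    have hcomp := HasDerivAt.comp u hE hsub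
    have hneg : HasDerivAt (fun w : ℝ => -(NN (T - w) i j))
        (-(((Υ + Υᵀ) + Aᵀ * NN (T - u) + NN (T - u) * A
          - NN (T - u) * (σ * σᵀ) * NN (T - u)) i j * -1)) u := hcomp.neg
    have hmat : (Υ + Υᵀ) + Aᵀ * NN (T - u) + NN (T - u) * A
          - NN (T - u) * (σ * σᵀ) * NN (T - u)
        = (Υ + Υᵀ) - Aᵀ * S u - S u * A - S u * (σ * σᵀ) * S u := by
      rw [show NN (T - u) = -(S u) from by simp [hSdef]]
      exact neg_subst _ _ _ _
    have hval : -(((Υ + Υᵀ) + Aᵀ * NN (T - u) + NN (T - u) * A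
          - NN (T - u) * (σ * σᵀ) * NN (T - u)) i j * -1)
        = ((Υ + Υᵀ) - Aᵀ * S u - S u * A - S u * (σ * σᵀ) * S u) i j := by
      rw [hmat]; ring
    rw [hval] at hneg
    exact hneg
  have hNE : ∀ i j, ContinuousOn (fun v => NN v i j) (Ici 0) := by
    intro i j v hv
    exact ((hNd v hv i j).continuousAt).continuousWithinAt
  have hSE : ∀ i j, ContinuousOn (fun u => S u i j) (Icc 0 T) := by
    intro i j
    have hmap : MapsTo (fun u : ℝ => T - u) (Icc 0 T) (Ici 0) := fun u hu => by
      simp only [mem_Ici]; linarith [hu.2]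
    have hTc : ContinuousOn (fun u : ℝ => T - u) (Icc 0 T) :=
      (continuous_const.sub continuous_id).continuousOn
    have h := ((hNE i j).comp hTc hmap).neg
    exact h
  have hSA : ∀ i j, ContinuousOn (fun u => (S u * A) i j) (Icc 0 T) := by
    intro i j
    simp only [Matrix.mul_apply]
    exact continuousOn_finset_sum _ fun k _ => (hSE i k).mul continuousOn_const
  have hSBS : ∀ i j, ContinuousOn (fun u => (S u * (σ * σᵀ) * S u) i j) (Icc 0 T) := by
    intro i j
    simp only [Matrix.mul_apply]
    exact continuousOn_finset_sum _ fun k _ =>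
      ((continuousOn_finset_sum _ fun l _ => (hSE i l).mul continuousOn_const).mul (hSE k j))
  have hgE : ∀ i j, ContinuousOn (fun u => g u i j) (Icc 0 T) := by
    intro i j
    have he : (fun u => g u i j)
        = fun u => Υ i j - (S u * A) i j - (1 / 2 : ℝ) * ((S u * (σ * σᵀ) * S u) i j) := by
      funext u
      simp [hgdef, Matrix.sub_apply, Matrix.smul_apply, smul_eq_mul]
    rw [he]
    exact (continuousOn_const.sub (hSA i j)).sub (continuousOn_const.mul (hSBS i j))
  have hGE : ∀ i j, Continuous (fun s => G s i j) := by
    intro i j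
    exact (hgE i j).comp_continuous hccont hcmem
  set R₂ : ℝ → Matrix (Fin n) (Fin n) ℝ :=
    fun t => Θ + Matrix.of (fun i j => ∫ s in T..t, G s i j) with hRdef
  have hRd : ∀ t, HasDerivAt R₂ (G t) t := by
    intro t
    apply matrix_hasDerivAt
    intro i j
    have h1 := ((hGE i j).integral_hasStrictDerivAt T t).hasDerivAt
    have h2 := h1.const_add (Θ i j)
    exact h2
  have hRC1 : ContDiff ℝ 1 R₂ := by
    rw [contDiff_one_iff_deriv]
    refine ⟨fun t => (hRd t).differentiableAt, ?_⟩
    rw [funext fun t => (hRd t).deriv]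
    exact matrix_continuous hGE
  refine ⟨R₂, hRC1.contDiffOn, ?_, ?_⟩
  swap
  · ext i j
    simp [hRdef, intervalIntegral.integral_same]
  intro t htmem
  have ht0 : (0:ℝ) ≤ t := htmem.1
  have htT : t ≤ T := htmem.2
  have hdw : derivWithin R₂ (Icc 0 T) t = G t :=
    ((hRd t).differentiableAt.derivWithin ((uniqueDiffOn_Icc hT) t htmem)).trans ((hRd t).deriv)
  have hGt : G t = g t := by
    simp only [hGdef]
    rw [hceq t htmem]
  have hST : S T = Θ + Θᵀ := by simp [hSdef, hN0]
  have key : ∀ i j, (∫ s in t..T, (G s j i + G s i j)) = (Θ + Θᵀ) i j - S t i j := by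
    intro i j
    have hBsym : (σ * σᵀ)ᵀ = σ * σᵀ := by rw [transpose_mul, transpose_transpose]
    have hderiv : ∀ s ∈ uIcc t T, HasDerivAt (fun u => S u i j) (G s j i + G s i j) s := by
      intro s hs
      rw [uIcc_of_le htT] at hs
      have hs0T : s ∈ Icc (0:ℝ) T := ⟨le_trans ht0 hs.1, hs.2⟩
      have hd := hSd s hs0T i j
      have hgg := g_add_transpose Υ A (σ * σᵀ) (S s) (hSsym s hs0T) hBsym
      have hgs : g s = Υ - S s * A - (1 / 2 : ℝ) • (S s * (σ * σᵀ) * S s) := by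
        rw [hgdef]
      have hGs : G s = g s := by
        simp only [hGdef]
        rw [hceq s hs0T]
      have he : G s j i + G s i j
          = ((Υ + Υᵀ) - Aᵀ * S s - S s * A - S s * (σ * σᵀ) * S s) i j := by
        calc G s j i + G s i j = g s j i + g s i j := by rw [hGs]
          _ = (g s + (g s)ᵀ) i j := by
              simp only [Matrix.add_apply, Matrix.transpose_apply]; ring
          _ = ((Υ + Υᵀ) - Aᵀ * S s - S s * A - S s * (σ * σᵀ) * S s) i j := by
              rw [hgs, hgg]
      rw [he]
      exact hd
    have hint : IntervalIntegrable (fun s => G s j i + G s i j) MeasureTheory.volume t T :=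
      ((hGE j i).add (hGE i j)).intervalIntegrable _ _
    have hFTC := intervalIntegral.integral_eq_sub_of_hasDerivAt hderiv hint
    rw [hFTC]
    simp [hST]
  have hRS : (R₂ t)ᵀ + R₂ t = S t := by
    ext i j
    have hint1 := (hGE j i).intervalIntegrable (μ := MeasureTheory.volume) T t
    have hint2 := (hGE i j).intervalIntegrable (μ := MeasureTheory.volume) T t
    have hadd : (∫ s in T..t, G s j i) + (∫ s in T..t, G s i j)
        = ∫ s in T..t, (G s j i + G s i j) :=
      (intervalIntegral.integral_add hint1 hint2).symm
    have hsym : (∫ s in T..t, (G s j i + G s i j))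
        = -(∫ s in t..T, (G s j i + G s i j)) := by
      rw [intervalIntegral.integral_symm]
    have e1 : ((R₂ t)ᵀ + R₂ t) i j
        = (Θ j i + (∫ s in T..t, G s j i)) + (Θ i j + (∫ s in T..t, G s i j)) := by
      simp [hRdef, Matrix.add_apply, Matrix.transpose_apply, Matrix.of_apply]
    have e2 := key i j
    have e3 : (Θ + Θᵀ) i j = Θ i j + Θ j i := by
      simp [Matrix.add_apply, Matrix.transpose_apply]
    have e4 : (S t) i j = S t i j := rfl
    rw [e1]
    linarith [hadd, hsym, e2, e3]
  rw [hdw, hGt, hRS]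
  rw [hgdef]
  beta_reduce
  module
end

section
/- Suppose R₂ : [0,T] → ℝ^{n×n} is a C¹ solution of the nonsymmetric Riccati terminal value problem (NR). Then U(t) := −(1/2)(R₂(t) + R₂(t)ᵀ) solves the symmetric Riccati terminal value problem (SR), and V(t) := −(1/2)(R₂(t) − R₂(t)ᵀ) satisfies V(t) = C̃₁ + ∫_t^T (U(s)A − AᵀU(s) + Q̃) ds for all t ∈ [0,T]. -/
open Matrix Set

attribute [local instance] Matrix.normedAddCommGroup Matrix.normedSpace

/-- If `R₂` is a C¹ solution of the nonsymmetric Riccati terminal value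
problem (NR), then `U(t) = -(1/2)(R₂(t) + R₂(t)ᵀ)` solves the symmetric Riccati terminal
value problem (SR), and `V(t) = -(1/2)(R₂(t) - R₂(t)ᵀ)` satisfies
`V(t) = C̃₁ + ∫_t^T (U(s)A - AᵀU(s) + Q̃) ds` on `[0,T]`. -/
theorem statement5 (n : ℕ) (hn : 1 ≤ n) (T : ℝ) (hT : 0 < T)
    (A σ Υ Θ : Matrix (Fin n) (Fin n) ℝ)
    (Q Qtilde C₁ Ctilde₁ : Matrix (Fin n) (Fin n) ℝ)
    (hQ : Q = (1 / 2 : ℝ) • (Υ + Υᵀ))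
    (hQtilde : Qtilde = (1 / 2 : ℝ) • (Υ - Υᵀ))
    (hC₁ : C₁ = -((1 / 2 : ℝ) • (Θ + Θᵀ)))
    (hCtilde₁ : Ctilde₁ = -((1 / 2 : ℝ) • (Θ - Θᵀ)))
    (R₂ : ℝ → Matrix (Fin n) (Fin n) ℝ)
    (hR₂smooth : ContDiffOn ℝ 1 R₂ (Icc 0 T))
    (hR₂ode : ∀ t ∈ Icc 0 T,
      derivWithin R₂ (Icc 0 T) t + ((R₂ t)ᵀ + R₂ t) * A
        + (1 / 2 : ℝ) • (((R₂ t)ᵀ + R₂ t) * (σ * σᵀ) * ((R₂ t)ᵀ + R₂ t)) - Υ = 0)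
    (hR₂T : R₂ T = Θ)
    (U V : ℝ → Matrix (Fin n) (Fin n) ℝ)
    (hU : ∀ t, U t = -((1 / 2 : ℝ) • (R₂ t + (R₂ t)ᵀ)))
    (hV : ∀ t, V t = -((1 / 2 : ℝ) • (R₂ t - (R₂ t)ᵀ))) :
    (ContDiffOn ℝ 1 U (Icc 0 T) ∧
      (∀ t ∈ Icc 0 T,
        derivWithin U (Icc 0 T) t + U t * A + Aᵀ * U t
          - (2 : ℝ) • (U t * (σ * σᵀ) * U t) + Q = 0) ∧
      U T = C₁) ∧
    (∀ t ∈ Icc 0 T, V t = Ctilde₁ + ∫ s in t..T, (U s * A - Aᵀ * U s + Qtilde)) := by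
  have hud : UniqueDiffOn ℝ (Icc (0:ℝ) T) := uniqueDiffOn_Icc hT
  -- transpose as a continuous linear map
  let L : Matrix (Fin n) (Fin n) ℝ →L[ℝ] Matrix (Fin n) (Fin n) ℝ :=
    LinearMap.toContinuousLinearMap
      ((Matrix.transposeLinearEquiv (Fin n) (Fin n) ℝ ℝ).toLinearMap)
  have hL : ∀ X : Matrix (Fin n) (Fin n) ℝ, L X = Xᵀ := fun X => rfl
  have hR₂' : ∀ t ∈ Icc (0:ℝ) T,
      HasDerivWithinAt R₂ (derivWithin R₂ (Icc 0 T) t) (Icc 0 T) t := fun t ht =>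
    (hR₂smooth.differentiableOn one_ne_zero t ht).hasDerivWithinAt
  have hTr : ∀ t ∈ Icc (0:ℝ) T,
      HasDerivWithinAt (fun s => (R₂ s)ᵀ) ((derivWithin R₂ (Icc 0 T) t)ᵀ) (Icc 0 T) t := by
    intro t ht
    have h := (L.hasFDerivAt (x := R₂ t)).comp_hasDerivWithinAt t (hR₂' t ht)
    exact h
  have hTcd : ContDiffOn ℝ 1 (fun s => (R₂ s)ᵀ) (Icc (0:ℝ) T) := by
    have h := (L.contDiff (n := 1)).comp_contDiffOn hR₂smooth
    exact h
  have hUfun : U = fun s => -((1 / 2 : ℝ) • (R₂ s + (R₂ s)ᵀ)) := funext hU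
  have hVfun : V = fun s => -((1 / 2 : ℝ) • (R₂ s - (R₂ s)ᵀ)) := funext hV
  have hUcd : ContDiffOn ℝ 1 U (Icc 0 T) := by
    rw [hUfun]; exact ((hR₂smooth.add hTcd).const_smul _).neg
  have hVcd : ContDiffOn ℝ 1 V (Icc 0 T) := by
    rw [hVfun]; exact ((hR₂smooth.sub hTcd).const_smul _).neg
  -- solve the NR ode for the derivative
  have hDt : ∀ t ∈ Icc (0:ℝ) T, derivWithin R₂ (Icc 0 T) t
      = Υ - ((R₂ t)ᵀ + R₂ t) * A
        - (1 / 2 : ℝ) • (((R₂ t)ᵀ + R₂ t) * (σ * σᵀ) * ((R₂ t)ᵀ + R₂ t)) := by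
    intro t ht
    have h := hR₂ode t ht
    have h2 : derivWithin R₂ (Icc 0 T) t
        - (Υ - ((R₂ t)ᵀ + R₂ t) * A
          - (1 / 2 : ℝ) • (((R₂ t)ᵀ + R₂ t) * (σ * σᵀ) * ((R₂ t)ᵀ + R₂ t)))
        = derivWithin R₂ (Icc 0 T) t + ((R₂ t)ᵀ + R₂ t) * A
          + (1 / 2 : ℝ) • (((R₂ t)ᵀ + R₂ t) * (σ * σᵀ) * ((R₂ t)ᵀ + R₂ t)) - Υ := by
      module
    exact sub_eq_zero.mp (h2.trans h)
  have hU' : ∀ t ∈ Icc (0:ℝ) T,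
      HasDerivWithinAt U
        (-((1 / 2 : ℝ) • (derivWithin R₂ (Icc 0 T) t + (derivWithin R₂ (Icc 0 T) t)ᵀ)))
        (Icc 0 T) t := by
    intro t ht
    rw [hUfun]
    exact (((hR₂' t ht).add (hTr t ht)).const_smul ((1:ℝ)/2)).neg
  have hV' : ∀ t ∈ Icc (0:ℝ) T,
      HasDerivWithinAt V
        (-((1 / 2 : ℝ) • (derivWithin R₂ (Icc 0 T) t - (derivWithin R₂ (Icc 0 T) t)ᵀ)))
        (Icc 0 T) t := by
    intro t ht
    rw [hVfun]
    exact (((hR₂' t ht).sub (hTr t ht)).const_smul ((1:ℝ)/2)).neg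
  refine ⟨⟨hUcd, ?_, ?_⟩, ?_⟩
  · -- symmetric Riccati ODE
    intro t ht
    erw [(hU' t ht).derivWithin (hud t ht)]; rw [hDt t ht, hU t, hQ]
    simp only [transpose_add, transpose_sub, transpose_smul, transpose_mul, transpose_neg,
      transpose_transpose, mul_add, add_mul, sub_mul, mul_sub, neg_mul, mul_neg,
      smul_mul_assoc, mul_smul_comm, mul_assoc]
    module
  · rw [hU T, hR₂T, hC₁]
  · -- the integral identity for V
    intro t ht
    have htT : t ≤ T := ht.2
    have hVderiv : ∀ s ∈ Ioo t T, HasDerivAt V (-(U s * A - Aᵀ * U s + Qtilde)) s := by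
      intro s hs
      have hsI : s ∈ Icc (0:ℝ) T := ⟨le_trans ht.1 hs.1.le, hs.2.le⟩
      have hmem : Icc (0:ℝ) T ∈ nhds s :=
        Icc_mem_nhds (lt_of_le_of_lt ht.1 hs.1) hs.2
      have h1 := (hV' s hsI).hasDerivAt hmem
      have heq : -((1 / 2 : ℝ) • (derivWithin R₂ (Icc 0 T) s - (derivWithin R₂ (Icc 0 T) s)ᵀ))
          = -(U s * A - Aᵀ * U s + Qtilde) := by
        rw [hDt s hsI, hU s, hQtilde]
        simp only [transpose_add, transpose_sub, transpose_smul, transpose_mul, transpose_neg,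
          transpose_transpose, mul_add, add_mul, sub_mul, mul_sub, neg_mul, mul_neg,
          smul_mul_assoc, mul_smul_comm, mul_assoc]
        module
      rw [heq] at h1
      exact h1
    have hVcont : ContinuousOn V (Icc t T) :=
      hVcd.continuousOn.mono (Icc_subset_Icc ht.1 le_rfl)
    have hcg : Continuous fun X : Matrix (Fin n) (Fin n) ℝ => -(X * A - Aᵀ * X + Qtilde) := by
      fun_prop
    have hgcont : ContinuousOn (fun s => -(U s * A - Aᵀ * U s + Qtilde)) (Icc t T) :=
      hcg.comp_continuousOn (hUcd.continuousOn.mono (Icc_subset_Icc ht.1 le_rfl))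
    have hint : @IntervalIntegrable _ (Matrix.normedAddCommGroup (n := Fin n) (m := Fin n) (α := ℝ)).toUniformSpace.toTopologicalSpace _ (fun s => -(U s * A - Aᵀ * U s + Qtilde))
        MeasureTheory.volume t T := by
      apply ContinuousOn.intervalIntegrable
      rwa [uIcc_of_le htT]
    have hftc := intervalIntegral.integral_eq_sub_of_hasDerivAt_of_le htT hVcont hVderiv hint
    rw [intervalIntegral.integral_neg] at hftc
    have hVT : V T = Ctilde₁ := by rw [hV T, hR₂T, hCtilde₁]
    have h5 : V t - V T = ∫ s in t..T, (U s * A - Aᵀ * U s + Qtilde) := by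
      rw [← neg_sub, ← hftc, neg_neg]
    rw [sub_eq_iff_eq_add] at h5
    rw [h5, hVT, add_comm]
end

section
/- Suppose U : [0,T] → ℝ^{n×n} is a C¹ solution of the symmetric Riccati terminal value problem (SR), and define V(t) := C̃₁ + ∫_t^T (U(s)A − AᵀU(s) + Q̃) ds for t ∈ [0,T]. Then R₂(t) := −(U(t) + V(t)) is a C¹ solution of the nonsymmetric Riccati terminal value problem (NR) on [0,T]. -/
open Matrix Set

attribute [local instance] Matrix.normedAddCommGroup Matrix.normedSpace

section ErasedTop

attribute [-instance] instTopologicalSpaceMatrix Matrix.instUniformSpace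

def matContMul (n : ℕ) : ContinuousMul (Matrix (Fin n) (Fin n) ℝ) :=
  ⟨@continuous_mul (Matrix (Fin n) (Fin n) ℝ) instTopologicalSpaceMatrix _ _⟩

attribute [local instance] matContMul

namespace Statement6Aux

variable {n : ℕ}

/-- Transpose as a continuous linear map. -/
noncomputable def tCLM (n : ℕ) : Matrix (Fin n) (Fin n) ℝ →L[ℝ] Matrix (Fin n) (Fin n) ℝ :=
  LinearMap.toContinuousLinearMap
    { toFun := fun X => Xᵀ
      map_add' := fun X Y => Matrix.transpose_add X Y
      map_smul' := fun c X => Matrix.transpose_smul c X }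

@[simp] lemma tCLM_apply (X : Matrix (Fin n) (Fin n) ℝ) : tCLM n X = Xᵀ := rfl

/-- `X ↦ -(X*A) - Aᵀ*X` as a continuous linear map. -/
noncomputable def baseCLM (A : Matrix (Fin n) (Fin n) ℝ) :
    Matrix (Fin n) (Fin n) ℝ →L[ℝ] Matrix (Fin n) (Fin n) ℝ :=
  LinearMap.toContinuousLinearMap
    { toFun := fun X => -(X * A) - Aᵀ * X
      map_add' := by intro X Y; noncomm_ring
      map_smul' := by
        intro c X
        simp only [smul_mul_assoc, mul_smul_comm, RingHom.id_apply, smul_sub, smul_neg] }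

@[simp] lemma baseCLM_apply (A X : Matrix (Fin n) (Fin n) ℝ) :
    baseCLM A X = -(X * A) - Aᵀ * X := rfl

/-- `(M, X) ↦ 2•(M*S*X + X*S*Mᵀ)` as a continuous bilinear map. -/
noncomputable def bilCLM (S : Matrix (Fin n) (Fin n) ℝ) :
    Matrix (Fin n) (Fin n) ℝ →L[ℝ]
      Matrix (Fin n) (Fin n) ℝ →L[ℝ] Matrix (Fin n) (Fin n) ℝ :=
  LinearMap.toContinuousLinearMap
    ((LinearMap.toContinuousLinearMap :
        (Matrix (Fin n) (Fin n) ℝ →ₗ[ℝ] Matrix (Fin n) (Fin n) ℝ) ≃ₗ[ℝ]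
          (Matrix (Fin n) (Fin n) ℝ →L[ℝ] Matrix (Fin n) (Fin n) ℝ)).toLinearMap ∘ₗ
      LinearMap.mk₂ ℝ (fun M X => (2 : ℝ) • (M * S * X + X * S * Mᵀ))
        (by intro M M' X
            simp only [add_mul, mul_add, Matrix.transpose_add, smul_add]
            module)
        (by intro c M X
            simp only [smul_mul_assoc, mul_smul_comm, Matrix.transpose_smul, smul_add]
            module)
        (by intro M X X'
            simp only [add_mul, mul_add, smul_add]
            module)
        (by intro c M X
            simp only [smul_mul_assoc, mul_smul_comm, smul_add]
            module))

@[simp] lemma bilCLM_apply (S M X : Matrix (Fin n) (Fin n) ℝ) :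
    bilCLM S M X = (2 : ℝ) • (M * S * X + X * S * Mᵀ) := rfl

end Statement6Aux

open Statement6Aux

theorem statement6_aux (n : ℕ) (hn : 1 ≤ n) (T : ℝ) (hT : 0 < T)
    (A σ Υ Θ : Matrix (Fin n) (Fin n) ℝ)
    (Q Qtilde C₁ Ctilde₁ : Matrix (Fin n) (Fin n) ℝ)
    (hQ : Q = (1 / 2 : ℝ) • (Υ + Υᵀ))
    (hQtilde : Qtilde = (1 / 2 : ℝ) • (Υ - Υᵀ))
    (hC₁ : C₁ = -((1 / 2 : ℝ) • (Θ + Θᵀ)))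
    (hCtilde₁ : Ctilde₁ = -((1 / 2 : ℝ) • (Θ - Θᵀ)))
    (U : ℝ → Matrix (Fin n) (Fin n) ℝ)
    (hUsmooth : ContDiffOn ℝ 1 U (Icc 0 T))
    (hUode : ∀ t ∈ Icc 0 T,
      derivWithin U (Icc 0 T) t + U t * A + Aᵀ * U t
        - (2 : ℝ) • (U t * (σ * σᵀ) * U t) + Q = 0)
    (hUT : U T = C₁)
    (V : ℝ → Matrix (Fin n) (Fin n) ℝ)
    (hV : ∀ t, V t = Ctilde₁ + ∫ s in t..T, (U s * A - Aᵀ * U s + Qtilde))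
    (R₂ : ℝ → Matrix (Fin n) (Fin n) ℝ)
    (hR₂ : ∀ t, R₂ t = -(U t + V t)) :
    ContDiffOn ℝ 1 R₂ (Icc 0 T) ∧
    (∀ t ∈ Icc 0 T,
      derivWithin R₂ (Icc 0 T) t + ((R₂ t)ᵀ + R₂ t) * A
        + (1 / 2 : ℝ) • (((R₂ t)ᵀ + R₂ t) * (σ * σᵀ) * ((R₂ t)ᵀ + R₂ t)) - Υ = 0) ∧
    R₂ T = Θ := by
  have hR₂f : R₂ = fun t => -(U t + V t) := funext hR₂
  set Sm : Matrix (Fin n) (Fin n) ℝ := σ * σᵀ with hSm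
  have hSsym : Smᵀ = Sm := by simp [hSm, Matrix.transpose_mul]
  have hQsym : Qᵀ = Q := by rw [hQ]; simp [Matrix.transpose_add, Matrix.transpose_smul]; module
  have hQtskew : Qtildeᵀ = -Qtilde := by
    rw [hQtilde]; simp [Matrix.transpose_sub, Matrix.transpose_smul]; module
  have hC₁sym : C₁ᵀ = C₁ := by
    rw [hC₁]; simp [Matrix.transpose_add, Matrix.transpose_smul]; module
  have hCtskew : Ctilde₁ᵀ = -Ctilde₁ := by
    rw [hCtilde₁]; simp [Matrix.transpose_sub, Matrix.transpose_smul]; module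
  have hUcont : ContinuousOn U (Icc 0 T) := hUsmooth.continuousOn
  have hUdiff : DifferentiableOn ℝ U (Icc 0 T) := hUsmooth.differentiableOn one_ne_zero
  have hUD : UniqueDiffOn ℝ (Icc (0:ℝ) T) := uniqueDiffOn_Icc hT
  have hU' : ∀ t ∈ Icc (0:ℝ) T,
      HasDerivWithinAt U (derivWithin U (Icc 0 T) t) (Icc 0 T) t :=
    fun t ht => (hUdiff t ht).hasDerivWithinAt
  have hUode' : ∀ t ∈ Icc (0:ℝ) T,
      derivWithin U (Icc 0 T) t
        = (2 : ℝ) • (U t * Sm * U t) - U t * A - Aᵀ * U t - Q := by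
    intro t ht
    have h := hUode t ht
    rw [← sub_eq_zero, ← h]
    module
  -- clamp of ℝ onto [0,T]
  set π : ℝ → ℝ := fun s => max 0 (min s T) with hπdef
  have hπmem : ∀ s, π s ∈ Icc (0:ℝ) T :=
    fun s => ⟨le_max_left _ _, max_le hT.le (min_le_right _ _)⟩
  have hπid : ∀ s ∈ Icc (0:ℝ) T, π s = s := by
    intro s hs
    simp [hπdef, min_eq_left hs.2, max_eq_right hs.1]
  have hπcont : Continuous π := by fun_prop
  have hUccont : Continuous (fun s => U (π s)) := hUcont.comp_continuous hπcont hπmem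
  -- Step 1: U is symmetric on [0,T].
  obtain ⟨C, hC⟩ := isCompact_Icc.exists_bound_of_continuousOn hUcont
  set v : ℝ → Matrix (Fin n) (Fin n) ℝ → Matrix (Fin n) (Fin n) ℝ :=
    fun t X => (baseCLM A + bilCLM Sm (U (π t))) X with hvdef
  set K : NNReal := ‖baseCLM (n := n) A‖₊ + ‖bilCLM (n := n) Sm‖₊ * (max C 0).toNNReal with hK
  have hvlip : ∀ t, LipschitzOnWith K (v t) (univ : Set (Matrix (Fin n) (Fin n) ℝ)) := by
    intro t
    refine ((baseCLM A + bilCLM Sm (U (π t))).lipschitz.weaken ?_).lipschitzOnWith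
    calc ‖baseCLM A + bilCLM Sm (U (π t))‖₊
        ≤ ‖baseCLM (n := n) A‖₊ + ‖bilCLM Sm (U (π t))‖₊ := nnnorm_add_le _ _
      _ ≤ K := by
          rw [hK]
          gcongr
          refine le_trans ((bilCLM Sm).le_opNNNorm _) ?_
          gcongr
          have h1 : ‖U (π t)‖ ≤ max C 0 := le_trans (hC _ (hπmem t)) (le_max_left _ _)
          rw [← norm_toNNReal]
          exact Real.toNNReal_mono h1
  have husym : ∀ t ∈ Icc (0:ℝ) T, (U t)ᵀ = U t := by
    have key : EqOn (fun t => U t - (U t)ᵀ)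
        (fun _ => (0 : Matrix (Fin n) (Fin n) ℝ)) (Icc 0 T) := by
      apply ODE_solution_unique_of_mem_Icc_left (v := v) (s := fun _ => univ) (fun t _ => hvlip t)
      · exact hUcont.sub ((tCLM n).continuous.comp_continuousOn hUcont)
      · intro t ht
        have htIcc : t ∈ Icc (0:ℝ) T := ⟨ht.1.le, ht.2⟩
        have hmem : Icc (0:ℝ) T ∈ nhdsWithin t (Iic t) := Icc_mem_nhdsLE_of_mem ⟨ht.1, ht.2⟩
        have hd : HasDerivWithinAt U (derivWithin U (Icc 0 T) t) (Iic t) t :=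
          (hU' t htIcc).mono_of_mem_nhdsWithin hmem
        have hdt : HasDerivWithinAt (fun s => (U s)ᵀ)
            ((derivWithin U (Icc 0 T) t)ᵀ) (Iic t) t := by
          exact (tCLM n).hasFDerivAt.comp_hasDerivWithinAt t hd
        have := hd.sub hdt
        convert this using 1
        · rfl
        rw [hvdef]
        simp only [ContinuousLinearMap.add_apply, baseCLM_apply, bilCLM_apply, hπid t htIcc,
          hUode' t htIcc]
        simp only [Matrix.transpose_sub, Matrix.transpose_add, Matrix.transpose_smul,
          Matrix.transpose_mul, Matrix.transpose_transpose, hSsym, hQsym,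
          mul_sub, sub_mul, smul_add, smul_sub, mul_assoc]
        module
      · intro t _; exact mem_univ _
      · exact continuousOn_const
      · intro t ht
        have h0 : v t 0 = 0 := by
          rw [hvdef]; simp
        rw [h0]
        exact hasDerivWithinAt_const _ _ _
      · intro t _; exact mem_univ _
      · simp [hUT, hC₁sym]
    intro t ht
    have := key ht
    simp only at this
    rw [sub_eq_zero] at this
    exact this.symm
  -- Step 2: derivative of V.
  set h : ℝ → Matrix (Fin n) (Fin n) ℝ := fun s => U s * A - Aᵀ * U s + Qtilde with hhdef
  set hext : ℝ → Matrix (Fin n) (Fin n) ℝ :=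
    fun s => U (π s) * A - Aᵀ * U (π s) + Qtilde with hhextdef
  have hexteq : ∀ s ∈ Icc (0:ℝ) T, hext s = h s := by
    intro s hs; simp [hhextdef, hhdef, hπid s hs]
  have hextcont : Continuous hext := by
    apply Continuous.add
    · exact (hUccont.mul continuous_const).sub (continuous_const.mul hUccont)
    · exact continuous_const
  have hextint : ∀ a b : ℝ, IntervalIntegrable hext MeasureTheory.volume a b :=
    fun a b => hextcont.intervalIntegrable a b
  set W : ℝ → Matrix (Fin n) (Fin n) ℝ := fun t => ∫ s in t..T, hext s with hWdef
  have hW' : ∀ t : ℝ, HasDerivAt W (-(hext t)) t := by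
    intro t
    exact intervalIntegral.integral_hasDerivAt_left (hextint t T)
      hextcont.stronglyMeasurable.stronglyMeasurableAtFilter hextcont.continuousAt
  have hVW : ∀ t ∈ Icc (0:ℝ) T, V t = Ctilde₁ + W t := by
    intro t ht
    rw [hV t, hWdef]
    congr 1
    apply intervalIntegral.integral_congr
    intro s hs
    rw [uIcc_of_le ht.2] at hs
    exact (hexteq s ⟨le_trans ht.1 hs.1, hs.2⟩).symm
  have hV' : ∀ t ∈ Icc (0:ℝ) T, HasDerivWithinAt V (-(h t)) (Icc 0 T) t := by
    intro t ht
    have : HasDerivWithinAt (fun t => Ctilde₁ + W t) (-(hext t)) (Icc 0 T) t :=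
      ((hW' t).const_add Ctilde₁).hasDerivWithinAt
    rw [← hexteq t ht]
    exact this.congr (fun s hs => hVW s hs) (hVW t ht)
  have hVdiff : DifferentiableOn ℝ V (Icc 0 T) :=
    fun t ht => ((hV' t ht).differentiableWithinAt).mono (subset_refl _)
  have hVderiv : ∀ t ∈ Icc (0:ℝ) T, derivWithin V (Icc 0 T) t = -(h t) :=
    fun t ht => (hV' t ht).derivWithin (hUD t ht)
  have hhcont : ContinuousOn h (Icc 0 T) := by
    apply ContinuousOn.add
    · exact (hUcont.mul continuousOn_const).sub (continuousOn_const.mul hUcont)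
    · exact continuousOn_const
  have hVsmooth : ContDiffOn ℝ 1 V (Icc 0 T) := by
    rw [show (1 : WithTop ℕ∞) = 0 + 1 by norm_num, contDiffOn_succ_iff_derivWithin hUD]
    refine ⟨hVdiff, by simp, ?_⟩
    rw [contDiffOn_zero]
    exact ContinuousOn.congr hhcont.neg hVderiv
  -- Step 3: skew-symmetry of V on [0,T].
  have hVskew : ∀ t ∈ Icc (0:ℝ) T, (V t)ᵀ = -(V t) := by
    intro t ht
    rw [hVW t ht, Matrix.transpose_add, hCtskew, hWdef]
    have h1 : (∫ s in t..T, hext s)ᵀ = ∫ s in t..T, (hext s)ᵀ := by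
      exact ((tCLM n).intervalIntegral_comp_comm (hextint t T)).symm
    have h2 : (∫ s in t..T, (hext s)ᵀ) = ∫ s in t..T, -(hext s) := by
      apply intervalIntegral.integral_congr
      intro s hs
      rw [uIcc_of_le ht.2] at hs
      have hsIcc : s ∈ Icc (0:ℝ) T := ⟨le_trans ht.1 hs.1, hs.2⟩
      simp only [hhextdef, Matrix.transpose_add, Matrix.transpose_sub, Matrix.transpose_mul,
        Matrix.transpose_transpose, hQtskew, hπid s hsIcc, husym s hsIcc]
      module
    rw [show (∫ s in t..T, hext s)ᵀ = ∫ s in t..T, -(hext s) from h1.trans h2,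
      intervalIntegral.integral_neg]
    module
  refine ⟨?_, ?_, ?_⟩
  · rw [hR₂f]
    exact (hUsmooth.add hVsmooth).neg
  · intro t ht
    have hRderiv : derivWithin R₂ (Icc 0 T) t
        = -(derivWithin U (Icc 0 T) t + (-(h t))) := by
      rw [hR₂f]
      exact (((hU' t ht).add (hV' t ht)).neg).derivWithin (hUD t ht)
    have hRsum : (R₂ t)ᵀ + R₂ t = -((2 : ℝ) • U t) := by
      rw [hR₂f]
      simp only [Matrix.transpose_neg, Matrix.transpose_add, husym t ht, hVskew t ht]
      module
    rw [hRderiv, hRsum, hUode' t ht, hhdef]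
    simp only [hQ, hQtilde]
    simp only [neg_mul, mul_neg, smul_mul_assoc, mul_smul_comm, smul_add, smul_sub, smul_smul,
      smul_neg, neg_neg]
    norm_num
    module
  · rw [hR₂f]
    simp only [hV T, intervalIntegral.integral_same, add_zero, hUT, hC₁, hCtilde₁]
    module

end ErasedTop

/-- If `U` is a C¹ solution of the symmetric Riccati terminal value problem
(SR) and `V(t) = C̃₁ + ∫_t^T (U(s)A - AᵀU(s) + Q̃) ds`, then `R₂ := -(U + V)` is a C¹
solution of the nonsymmetric Riccati terminal value problem (NR) on `[0,T]`. -/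
theorem statement6 (n : ℕ) (hn : 1 ≤ n) (T : ℝ) (hT : 0 < T)
    (A σ Υ Θ : Matrix (Fin n) (Fin n) ℝ)
    (Q Qtilde C₁ Ctilde₁ : Matrix (Fin n) (Fin n) ℝ)
    (hQ : Q = (1 / 2 : ℝ) • (Υ + Υᵀ))
    (hQtilde : Qtilde = (1 / 2 : ℝ) • (Υ - Υᵀ))
    (hC₁ : C₁ = -((1 / 2 : ℝ) • (Θ + Θᵀ)))
    (hCtilde₁ : Ctilde₁ = -((1 / 2 : ℝ) • (Θ - Θᵀ)))
    (U : ℝ → Matrix (Fin n) (Fin n) ℝ)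
    (hUsmooth : ContDiffOn ℝ 1 U (Icc 0 T))
    (hUode : ∀ t ∈ Icc 0 T,
      derivWithin U (Icc 0 T) t + U t * A + Aᵀ * U t
        - (2 : ℝ) • (U t * (σ * σᵀ) * U t) + Q = 0)
    (hUT : U T = C₁)
    (V : ℝ → Matrix (Fin n) (Fin n) ℝ)
    (hV : ∀ t, V t = Ctilde₁ + ∫ s in t..T, (U s * A - Aᵀ * U s + Qtilde))
    (R₂ : ℝ → Matrix (Fin n) (Fin n) ℝ)
    (hR₂ : ∀ t, R₂ t = -(U t + V t)) :
    ContDiffOn ℝ 1 R₂ (Icc 0 T) ∧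
    (∀ t ∈ Icc 0 T,
      derivWithin R₂ (Icc 0 T) t + ((R₂ t)ᵀ + R₂ t) * A
        + (1 / 2 : ℝ) • (((R₂ t)ᵀ + R₂ t) * (σ * σᵀ) * ((R₂ t)ᵀ + R₂ t)) - Υ = 0) ∧
    R₂ T = Θ := by
  exact statement6_aux n hn T hT A σ Υ Θ Q Qtilde C₁ Ctilde₁ hQ hQtilde hC₁ hCtilde₁ U
    hUsmooth hUode hUT V hV R₂ hR₂
end

section
/- Suppose X, Y : [0,T] → ℝ^{n×n} are C¹ and satisfy X'(t) = A X(t) − 2σσᵀ Y(t), Y'(t) = −Q X(t) − Aᵀ Y(t) for all t ∈ [0,T] with X(T) = I and Y(T) = C₁, and suppose X(t) is invertible for every t ∈ [0,T]; set U(t) := Y(t)X(t)⁻¹. Let B ∈ ℝⁿ, let Ψ, θ ∈ ℝ^{1×n} be row vectors. Then R₁(t) := (θ − ∫_t^T (2BᵀY(s) + ΨX(s)) ds) · X(t)⁻¹ is a C¹ row-vector-valued function satisfying R₁'(t) + R₁(t)(A − 2σσᵀU(t)) − 2BᵀU(t) − Ψ = 0 for all t ∈ [0,T] and R₁(T) =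 θ. -/
open Matrix Set

attribute [local instance] Matrix.normedAddCommGroup Matrix.normedSpace

section Helpers

variable {l m p : Type*} [Fintype l] [Fintype m] [Fintype p]

lemma contDiffOn_entry {k : WithTop ℕ∞} {f : ℝ → Matrix l m ℝ} {s : Set ℝ}
    (hf : ContDiffOn ℝ k f s) (i : l) (j : m) :
    ContDiffOn ℝ k (fun t => f t i j) s :=
  contDiffOn_pi.mp (contDiffOn_pi.mp hf i) j

lemma ContDiffOn.matMul {k : WithTop ℕ∞} {f : ℝ → Matrix l m ℝ} {g : ℝ → Matrix m p ℝ}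
    {s : Set ℝ} (hf : ContDiffOn ℝ k f s) (hg : ContDiffOn ℝ k g s) :
    ContDiffOn ℝ k (fun t => f t * g t) s := by
  apply contDiffOn_pi.mpr; intro i; apply contDiffOn_pi.mpr; intro j
  have : (fun t => (f t * g t) i j) = fun t => ∑ r, f t i r * g t r j := by
    funext t; simp [Matrix.mul_apply]
  rw [this]
  exact ContDiffOn.sum fun r _ => (contDiffOn_entry hf i r).mul (contDiffOn_entry hg r j)

lemma HasDerivWithinAt.matMul {f : ℝ → Matrix l m ℝ} {g : ℝ → Matrix m p ℝ}
    {f' : Matrix l m ℝ} {g' : Matrix m p ℝ} {s : Set ℝ} {t : ℝ}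
    (hf : HasDerivWithinAt f f' s t) (hg : HasDerivWithinAt g g' s t) :
    HasDerivWithinAt (fun u => f u * g u) (f' * g t + f t * g') s t := by
  apply hasDerivWithinAt_pi.mpr; intro i; apply hasDerivWithinAt_pi.mpr; intro j
  have h1 : ∀ r : m, HasDerivWithinAt (fun u => f u i r) (f' i r) s t :=
    fun r => hasDerivWithinAt_pi.mp (hasDerivWithinAt_pi.mp hf i) r
  have h2 : ∀ r : m, HasDerivWithinAt (fun u => g u r j) (g' r j) s t :=
    fun r => hasDerivWithinAt_pi.mp (hasDerivWithinAt_pi.mp hg r) j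
  have key : HasDerivWithinAt (fun u => ∑ r, f u i r * g u r j)
      (∑ r : m, (f' i r * g t r j + f t i r * g' r j)) s t :=
    HasDerivWithinAt.fun_sum fun r _ => (h1 r).mul (h2 r)
  have e1 : (fun u => ∑ r, f u i r * g u r j) = fun u => (f u * g u) i j := by
    funext u; simp [Matrix.mul_apply]
  have e2 : (∑ r : m, (f' i r * g t r j + f t i r * g' r j)) = (f' * g t + f t * g') i j := by
    simp [Matrix.mul_apply, Finset.sum_add_distrib]
  rw [e1, e2] at key
  exact key

end Helpers

/-- Type synonym for square matrices carrying the `L∞` operator norm (a ring norm). -/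
def MXring (n : ℕ) : Type := Matrix (Fin n) (Fin n) ℝ

namespace MXring

variable {n : ℕ}

/-- The identity map into the synonym. -/
def of (x : Matrix (Fin n) (Fin n) ℝ) : MXring n := x

noncomputable instance : NormedRing (MXring n) := Matrix.linftyOpNormedRing
noncomputable instance : NormedAlgebra ℝ (MXring n) := Matrix.linftyOpNormedAlgebra
instance : FiniteDimensional ℝ (MXring n) :=
  inferInstanceAs (FiniteDimensional ℝ (Matrix (Fin n) (Fin n) ℝ))
instance : CompleteSpace (MXring n) := FiniteDimensional.complete ℝ (MXring n)

/-- The identity, as a continuous linear equivalence from `MXring n` to matrices with the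
elementwise sup norm. -/
noncomputable def cle (n : ℕ) : MXring n ≃L[ℝ] Matrix (Fin n) (Fin n) ℝ :=
  LinearEquiv.toContinuousLinearEquiv
    { toFun := fun x => x, invFun := fun x => x,
      map_add' := fun _ _ => rfl, map_smul' := fun _ _ => rfl,
      left_inv := fun _ => rfl, right_inv := fun _ => rfl }

end MXring

section InvHelper

variable {n : ℕ}

lemma hasDerivWithinAt_matrix_inv {X : ℝ → Matrix (Fin n) (Fin n) ℝ} {s : Set ℝ} {t : ℝ}
    {X' : Matrix (Fin n) (Fin n) ℝ} (hX : HasDerivWithinAt X X' s t) (h : IsUnit (X t)) :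
    HasDerivWithinAt (fun u => (X u)⁻¹) (-((X t)⁻¹ * X' * (X t)⁻¹)) s t := by
  obtain ⟨u, hu⟩ := h
  let u' : (MXring n)ˣ := ⟨u.val, u.inv, u.val_inv, u.inv_val⟩
  let e := MXring.cle n
  have hX2 : HasDerivWithinAt (fun v => MXring.of (X v)) (MXring.of X') s t :=
    e.symm.toContinuousLinearMap.hasFDerivAt.comp_hasDerivWithinAt t hX
  have hf : HasFDerivAt (Ring.inverse : MXring n → MXring n)
      (-ContinuousLinearMap.mulLeftRight ℝ (MXring n) ↑u'⁻¹ ↑u'⁻¹) (MXring.of (X t)) := by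
    have h0 := hasFDerivAt_ringInverse (𝕜 := ℝ) (R := MXring n) u'
    have hxt : ((u' : MXring n)) = MXring.of (X t) := hu
    rwa [hxt] at h0
  have hcomp := hf.comp_hasDerivWithinAt t hX2
  have hval : (-ContinuousLinearMap.mulLeftRight ℝ (MXring n) ↑u'⁻¹ ↑u'⁻¹) (MXring.of X')
      = MXring.of (-((X t)⁻¹ * X' * (X t)⁻¹)) := by
    have hui : ((u'⁻¹ : (MXring n)ˣ) : MXring n) = MXring.of ((X t)⁻¹) := by
      show ((u⁻¹ : (Matrix (Fin n) (Fin n) ℝ)ˣ) : Matrix (Fin n) (Fin n) ℝ) = (X t)⁻¹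
      rw [Matrix.coe_units_inv, hu]
    rw [ContinuousLinearMap.neg_apply, ContinuousLinearMap.mulLeftRight_apply, hui]
    rfl
  rw [hval] at hcomp
  have hcomp2 : HasDerivWithinAt (fun v : ℝ => MXring.of ((X v)⁻¹))
      (MXring.of (-((X t)⁻¹ * X' * (X t)⁻¹))) s t :=
    hcomp.congr (fun x _ => Matrix.nonsing_inv_eq_ringInverse (X x))
      (Matrix.nonsing_inv_eq_ringInverse (X t))
  exact e.toContinuousLinearMap.hasFDerivAt.comp_hasDerivWithinAt t hcomp2

lemma contDiffOn_matrix_inv {k : WithTop ℕ∞} {X : ℝ → Matrix (Fin n) (Fin n) ℝ} {s : Set ℝ}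
    (hX : ContDiffOn ℝ k X s) (h : ∀ t ∈ s, IsUnit (X t)) :
    ContDiffOn ℝ k (fun u => (X u)⁻¹) s := by
  let e := MXring.cle n
  have hX2 : ContDiffOn ℝ k (fun v => MXring.of (X v)) s :=
    e.symm.toContinuousLinearMap.contDiff.comp_contDiffOn hX
  have hinv : ContDiffOn ℝ k (fun v => Ring.inverse (MXring.of (X v))) s := by
    intro x hx
    obtain ⟨u, hu⟩ := h x hx
    let u' : (MXring n)ˣ := ⟨u.val, u.inv, u.val_inv, u.inv_val⟩
    have hct : ContDiffAt ℝ k (Ring.inverse : MXring n → MXring n) (MXring.of (X x)) := by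
      have h0 := contDiffAt_ringInverse ℝ (n := k) u'
      have hxt : ((u' : MXring n)) = MXring.of (X x) := hu
      rwa [hxt] at h0
    exact hct.comp_contDiffWithinAt x (hX2 x hx)
  have hinv2 : ContDiffOn ℝ k (fun v : ℝ => MXring.of ((X v)⁻¹)) s :=
    hinv.congr fun v _ => Matrix.nonsing_inv_eq_ringInverse (X v)
  exact e.toContinuousLinearMap.contDiff.comp_contDiffOn hinv2

end InvHelper

/-- With `X`, `Y` C¹ solutions of the linear terminal value system with
`X(t)` invertible on `[0,T]` and `U := Y X⁻¹`, the row vector function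
`R₁(t) = (θ - ∫_t^T (2BᵀY(s) + ΨX(s)) ds) X(t)⁻¹` is C¹ and satisfies
`R₁' + R₁(A - 2σσᵀU) - 2BᵀU - Ψ = 0` with `R₁(T) = θ`. -/
theorem statement10 (n : ℕ) (hn : 1 ≤ n) (T : ℝ) (hT : 0 < T)
    (A σ Υ Θ : Matrix (Fin n) (Fin n) ℝ)
    (Q C₁ : Matrix (Fin n) (Fin n) ℝ)
    (hQ : Q = (1 / 2 : ℝ) • (Υ + Υᵀ))
    (hC₁ : C₁ = -((1 / 2 : ℝ) • (Θ + Θᵀ)))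
    (X Y : ℝ → Matrix (Fin n) (Fin n) ℝ)
    (hXsmooth : ContDiffOn ℝ 1 X (Icc 0 T))
    (hYsmooth : ContDiffOn ℝ 1 Y (Icc 0 T))
    (hXode : ∀ t ∈ Icc 0 T,
      derivWithin X (Icc 0 T) t = A * X t - (2 : ℝ) • ((σ * σᵀ) * Y t))
    (hYode : ∀ t ∈ Icc 0 T,
      derivWithin Y (Icc 0 T) t = -(Q * X t) - Aᵀ * Y t)
    (hXT : X T = 1) (hYT : Y T = C₁)
    (hXinv : ∀ t ∈ Icc 0 T, IsUnit (X t))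
    (U : ℝ → Matrix (Fin n) (Fin n) ℝ)
    (hU : ∀ t, U t = Y t * (X t)⁻¹)
    (B : Matrix (Fin n) (Fin 1) ℝ) (Ψ θ : Matrix (Fin 1) (Fin n) ℝ)
    (R₁ : ℝ → Matrix (Fin 1) (Fin n) ℝ)
    (hR₁ : ∀ t, R₁ t =
      (θ - ∫ s in t..T, ((2 : ℝ) • (Bᵀ * Y s) + Ψ * X s)) * (X t)⁻¹) :
    ContDiffOn ℝ 1 R₁ (Icc 0 T) ∧
    (∀ t ∈ Icc 0 T,
      derivWithin R₁ (Icc 0 T) t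
        + R₁ t * (A - (2 : ℝ) • ((σ * σᵀ) * U t))
        - (2 : ℝ) • (Bᵀ * U t) - Ψ = 0) ∧
    R₁ T = θ := by
  have hs : UniqueDiffOn ℝ (Icc (0:ℝ) T) := uniqueDiffOn_Icc hT
  set F : ℝ → Matrix (Fin 1) (Fin n) ℝ :=
    fun u => (2 : ℝ) • (Bᵀ * Y u) + Ψ * X u with hFdef
  set G : ℝ → Matrix (Fin 1) (Fin n) ℝ :=
    fun u => θ - ∫ s in u..T, F s with hGdef
  have hR₁G : ∀ u, R₁ u = G u * (X u)⁻¹ := fun u => hR₁ u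
  -- smoothness/continuity of F
  have hFc1 : ContDiffOn ℝ 1 F (Icc 0 T) :=
    ((contDiffOn_const.matMul hYsmooth).const_smul (2:ℝ)).add
      (contDiffOn_const.matMul hXsmooth)
  have hFc : ContinuousOn F (Icc 0 T) := hFc1.continuousOn
  -- derivative of G
  have hGd : ∀ t ∈ Icc (0:ℝ) T, HasDerivWithinAt G (F t) (Icc 0 T) t := by
    intro t ht
    letI : ENormedAddMonoid (Matrix (Fin 1) (Fin n) ℝ) := NormedAddGroup.toENormedAddMonoid
    letI : TopologicalSpace.PseudoMetrizableSpace (Matrix (Fin 1) (Fin n) ℝ) :=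
      inferInstanceAs (TopologicalSpace.PseudoMetrizableSpace (Fin 1 → Fin n → ℝ))
    have hint : IntervalIntegrable F MeasureTheory.volume t T := by
      apply ContinuousOn.intervalIntegrable
      apply hFc.mono
      rw [uIcc_of_le ht.2]
      exact Icc_subset_Icc ht.1 le_rfl
    haveI : Fact (t ∈ Icc (0:ℝ) T) := ⟨ht⟩
    have hmeas : StronglyMeasurableAtFilter F (nhdsWithin t (Icc (0:ℝ) T)) :=
      hFc.stronglyMeasurableAtFilter_nhdsWithin measurableSet_Icc t
    have hder := intervalIntegral.integral_hasDerivWithinAt_left (s := Icc (0:ℝ) T)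
      (t := Icc (0:ℝ) T) hint hmeas (hFc t ht)
    have h2 := hder.const_sub θ
    rw [neg_neg] at h2
    exact h2
  -- derivative of X
  have hXd : ∀ t ∈ Icc (0:ℝ) T,
      HasDerivWithinAt X (A * X t - (2:ℝ) • ((σ * σᵀ) * Y t)) (Icc 0 T) t := by
    intro t ht
    have h1 : HasDerivWithinAt X (derivWithin X (Icc 0 T) t) (Icc 0 T) t :=
      (hXsmooth.differentiableOn one_ne_zero t ht).hasDerivWithinAt
    rwa [hXode t ht] at h1
  -- smoothness of G
  have hGc : ContDiffOn ℝ 1 G (Icc 0 T) := by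
    rw [show (1 : WithTop ℕ∞) = 0 + 1 from (zero_add 1).symm,
      contDiffOn_succ_iff_derivWithin hs]
    refine ⟨fun x hx => (hGd x hx).differentiableWithinAt, ?_, ?_⟩
    · intro h; exact absurd h (by decide)
    · rw [contDiffOn_zero]
      exact hFc.congr fun x hx => (hGd x hx).derivWithin (hs x hx)
  have hVc : ContDiffOn ℝ 1 (fun u => (X u)⁻¹) (Icc 0 T) :=
    contDiffOn_matrix_inv hXsmooth hXinv
  have hR₁c : ContDiffOn ℝ 1 R₁ (Icc 0 T) :=
    (hGc.matMul hVc).congr fun u _ => hR₁G u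
  refine ⟨hR₁c, ?_, ?_⟩
  · intro t ht
    have hVd := hasDerivWithinAt_matrix_inv (hXd t ht) (hXinv t ht)
    have hRd : HasDerivWithinAt R₁
        (F t * (X t)⁻¹ + G t *
          -((X t)⁻¹ * (A * X t - (2:ℝ) • ((σ * σᵀ) * Y t)) * (X t)⁻¹)) (Icc 0 T) t :=
      ((hGd t ht).matMul hVd).congr (fun u _ => hR₁G u) (hR₁G t)
    have hDW := hRd.derivWithin (hs t ht)
    have hdet : IsUnit (X t).det := (Matrix.isUnit_iff_isUnit_det _).mp (hXinv t ht)
    have hXV : X t * (X t)⁻¹ = 1 := Matrix.mul_nonsing_inv _ hdet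
    have e1 : F t * (X t)⁻¹ = (2:ℝ) • (Bᵀ * U t) + Ψ := by
      show ((2 : ℝ) • (Bᵀ * Y t) + Ψ * X t) * (X t)⁻¹ = _
      rw [Matrix.add_mul, Matrix.smul_mul, Matrix.mul_assoc, Matrix.mul_assoc, hXV,
        Matrix.mul_one, ← hU]
    have e2 : (A * X t - (2:ℝ) • ((σ * σᵀ) * Y t)) * (X t)⁻¹
        = A - (2:ℝ) • ((σ * σᵀ) * U t) := by
      rw [Matrix.sub_mul, Matrix.smul_mul, Matrix.mul_assoc, Matrix.mul_assoc, hXV,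
        Matrix.mul_one, ← hU]
    have e3 : G t * -((X t)⁻¹ * (A * X t - (2:ℝ) • ((σ * σᵀ) * Y t)) * (X t)⁻¹)
        = -(R₁ t * (A - (2:ℝ) • ((σ * σᵀ) * U t))) := by
      rw [mul_assoc ((X t)⁻¹), e2, Matrix.mul_neg, ← Matrix.mul_assoc, ← hR₁G t]
    rw [show derivWithin R₁ (Icc 0 T) t = _ from hDW, e1, e3]
    abel
  · rw [hR₁ T]
    simp [hXT]
end

section
/- Suppose R₂ : [0,T] → ℝ^{n×n} is C¹ with R₂'(t) + (R₂(t)ᵀ + R₂(t))A − Γ + (1/2)(R₂(t) + R₂(t)ᵀ)σσᵀ(R₂(t) + R₂(t)ᵀ) = 0 and R₂(T) = 0; R₁ : [0,T] → ℝ^{1×n} is C¹ with R₁'(t) + R₁(t)A + Bᵀ(R₂(t) + R₂(t)ᵀ) − R + R₁(t)σσᵀ(R₂(t) + R₂(t)ᵀ) = 0 and R₁(T) = 0; and R₀(t) = −∫_t^T (k − R₁(s)B − (1/2)R₁(s)σσᵀR₁(s)ᵀ − tr(σᵀR₂(s)σ)) ds. Then the function f(t,x) := exp(xᵀR₂(t)x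 + R₁(t)x + R₀(t)) satisfies, for all (t,x) ∈ [0,T] × ℝⁿ, ∂f/∂t(t,x) + (Ax + B)·∇ₓf(t,x) + (1/2)Σ_{i,j=1}^n (σσᵀ)_{ij} ∂²f/∂xᵢ∂xⱼ(t,x) = (xᵀΓx + Rx + k) f(t,x), together with the terminal condition f(T,x) = 1 for all x ∈ ℝⁿ. -/
open Matrix Set

attribute [local instance] Matrix.normedAddCommGroup Matrix.normedSpace

/-- Partial derivative of `g : ℝⁿ → ℝ` in the `i`-th coordinate at `x`. -/
noncomputable def pd {n : ℕ} (i : Fin n) (g : (Fin n → ℝ) → ℝ) (x : Fin n → ℝ) : ℝ :=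
  deriv (fun s => g (Function.update x i s)) (x i)

lemma update_eq_add {n : ℕ} (x : Fin n → ℝ) (j : Fin n) (s : ℝ) :
    Function.update x j s = x + (s - x j) • (Pi.single j 1 : Fin n → ℝ) := by
  funext i
  by_cases h : i = j
  · subst h; simp
  · simp [Function.update_of_ne h, Pi.single_apply, h]

lemma quad_update {n : ℕ} (P : Matrix (Fin n) (Fin n) ℝ) (x : Fin n → ℝ) (j : Fin n) (s : ℝ) :
    (Function.update x j s) ⬝ᵥ P.mulVec (Function.update x j s)
      = x ⬝ᵥ P.mulVec x + (s - x j) * (((P + Pᵀ).mulVec x) j) + (s - x j)^2 * P j j := by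
  rw [update_eq_add]
  have h1 : (Pi.single j 1 : Fin n → ℝ) ⬝ᵥ P.mulVec x = P.mulVec x j := by
    rw [single_dotProduct]; ring
  have h2 : x ⬝ᵥ P.mulVec (Pi.single j 1 : Fin n → ℝ) = Pᵀ.mulVec x j := by
    rw [dotProduct_mulVec, dotProduct_single, ← vecMul_transpose, transpose_transpose]
    ring
  have h3 : (Pi.single j 1 : Fin n → ℝ) ⬝ᵥ P.mulVec (Pi.single j 1 : Fin n → ℝ) = P j j := by
    rw [mulVec_single, single_dotProduct]; simp
  simp only [mulVec_add, mulVec_smul, dotProduct_add, add_dotProduct, dotProduct_smul,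
    smul_dotProduct, add_mulVec, Pi.add_apply, smul_eq_mul, h1, h2, h3]
  ring

lemma lin_update {n : ℕ} (p : Fin n → ℝ) (x : Fin n → ℝ) (j : Fin n) (s : ℝ) :
    p ⬝ᵥ (Function.update x j s) = p ⬝ᵥ x + (s - x j) * p j := by
  rw [update_eq_add]
  simp only [dotProduct_add, dotProduct_smul, dotProduct_single, smul_eq_mul]
  ring

lemma mulVec_update {n : ℕ} (P : Matrix (Fin n) (Fin n) ℝ) (x : Fin n → ℝ) (i j : Fin n) (s : ℝ) :
    (P.mulVec (Function.update x i s)) j = P.mulVec x j + (s - x i) * P j i := by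
  rw [update_eq_add]
  simp only [mulVec_add, mulVec_smul, Pi.add_apply, Pi.smul_apply, mulVec_single, smul_eq_mul,
    MulOpposite.op_one, one_smul, Matrix.col_apply]

lemma hasDerivAt_quadexp (a b c s₀ : ℝ) :
    HasDerivAt (fun s => Real.exp (c + (s - s₀) * b + (s - s₀)^2 * a)) (Real.exp c * b) s₀ := by
  have h1 : HasDerivAt (fun s : ℝ => s - s₀) 1 s₀ := (hasDerivAt_id s₀).sub_const s₀
  have h : HasDerivAt (fun s => c + (s - s₀) * b + (s - s₀)^2 * a) b s₀ := by
    have := ((h1.mul_const b).const_add c).add ((h1.pow 2).mul_const a)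
    simpa [Pi.add_def] using this
  have := h.exp
  simpa using this

lemma hasDerivAt_quadexp_mul (a b c e m s₀ : ℝ) :
    HasDerivAt (fun s => Real.exp (c + (s - s₀) * b + (s - s₀)^2 * a) * (e + (s - s₀) * m))
      (Real.exp c * b * e + Real.exp c * m) s₀ := by
  have h1 : HasDerivAt (fun s : ℝ => e + (s - s₀) * m) m s₀ := by
    have := (((hasDerivAt_id s₀).sub_const s₀).mul_const m).const_add e
    simpa using this
  have := (hasDerivAt_quadexp a b c s₀).mul h1
  simpa [Pi.mul_def] using this

lemma pd_exp {n : ℕ} (P : Matrix (Fin n) (Fin n) ℝ) (p : Fin n → ℝ) (c : ℝ)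
    (F : (Fin n → ℝ) → ℝ) (hF : ∀ y, F y = Real.exp (y ⬝ᵥ P.mulVec y + p ⬝ᵥ y + c))
    (x : Fin n → ℝ) (j : Fin n) :
    pd j F x = F x * (((P + Pᵀ).mulVec x) j + p j) := by
  unfold pd
  have hfun : (fun s => F (Function.update x j s))
      = fun s => Real.exp ((x ⬝ᵥ P.mulVec x + p ⬝ᵥ x + c)
          + (s - x j) * ((((P + Pᵀ).mulVec x) j) + p j) + (s - x j)^2 * P j j) := by
    funext s
    rw [hF, quad_update, lin_update]
    congr 1
    ring
  rw [hfun, (hasDerivAt_quadexp _ _ _ _).deriv, hF]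

lemma pd2_exp {n : ℕ} (P : Matrix (Fin n) (Fin n) ℝ) (p : Fin n → ℝ) (c : ℝ)
    (F : (Fin n → ℝ) → ℝ) (hF : ∀ y, F y = Real.exp (y ⬝ᵥ P.mulVec y + p ⬝ᵥ y + c))
    (x : Fin n → ℝ) (i j : Fin n) :
    pd i (pd j F) x = F x * ((((P + Pᵀ).mulVec x) i + p i) * (((P + Pᵀ).mulVec x) j + p j)
      + (P + Pᵀ) i j) := by
  have hsym : (P + Pᵀ) j i = (P + Pᵀ) i j := by
    simp [Matrix.add_apply, Matrix.transpose_apply]; ring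
  show deriv (fun s => pd j F (Function.update x i s)) (x i) = _
  have hfun : (fun s => pd j F (Function.update x i s))
      = fun s => Real.exp ((x ⬝ᵥ P.mulVec x + p ⬝ᵥ x + c)
          + (s - x i) * ((((P + Pᵀ).mulVec x) i) + p i) + (s - x i)^2 * P i i)
          * ((((P + Pᵀ).mulVec x) j + p j) + (s - x i) * (P + Pᵀ) i j) := by
    funext s
    rw [pd_exp P p c F hF, hF, quad_update, lin_update, mulVec_update, hsym]
    ring_nf
  rw [hfun, (hasDerivAt_quadexp_mul _ _ _ _ _ _).deriv, hF]
  ring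

lemma entry_CDCt {n : ℕ} (C : Matrix (Fin 1) (Fin n) ℝ) (D : Matrix (Fin n) (Fin n) ℝ) :
    (C * D * Cᵀ) 0 0 = (C 0) ⬝ᵥ D.mulVec (C 0) := by
  simp only [Matrix.mul_apply, Matrix.transpose_apply, dotProduct, mulVec, Finset.sum_mul,
    Finset.mul_sum]
  rw [Finset.sum_comm]
  refine Finset.sum_congr rfl fun j _ => Finset.sum_congr rfl fun i _ => by ring

lemma entry_CB {n : ℕ} (C : Matrix (Fin 1) (Fin n) ℝ) (B : Matrix (Fin n) (Fin 1) ℝ) :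
    (C * B) 0 0 = (C 0) ⬝ᵥ (fun j => B j 0) := by
  simp only [Matrix.mul_apply, dotProduct]

lemma double_sum_trace {n : ℕ} (σ P : Matrix (Fin n) (Fin n) ℝ) :
    ∑ i, ∑ j, (σ * σᵀ) i j * (P + Pᵀ) i j = 2 * Matrix.trace (σᵀ * P * σ) := by
  have h1 : ∑ i, ∑ j, (σ * σᵀ) i j * (P + Pᵀ) i j = Matrix.trace ((σ * σᵀ) * (P + Pᵀ)ᵀ) := by
    simp only [Matrix.trace, Matrix.diag, Matrix.mul_apply, Matrix.transpose_apply]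
  rw [h1]
  have h2 : (P + Pᵀ)ᵀ = P + Pᵀ := by rw [Matrix.transpose_add, Matrix.transpose_transpose, add_comm]
  rw [h2, Matrix.mul_add, Matrix.trace_add]
  have h3 : Matrix.trace (σ * σᵀ * P) = Matrix.trace (σᵀ * P * σ) := by
    rw [Matrix.mul_assoc, Matrix.trace_mul_comm, Matrix.mul_assoc]
  have h4 : Matrix.trace (σ * σᵀ * Pᵀ) = Matrix.trace (σᵀ * P * σ) := by
    rw [← Matrix.trace_transpose (σ * σᵀ * Pᵀ)]
    rw [Matrix.transpose_mul, Matrix.transpose_mul, Matrix.transpose_transpose,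
      Matrix.transpose_transpose]
    rw [Matrix.trace_mul_comm P (σ * σᵀ)]
    exact h3
  rw [h3, h4]; ring

lemma dot_mulVec_flip {n : ℕ} (M : Matrix (Fin n) (Fin n) ℝ) (v w : Fin n → ℝ) :
    v ⬝ᵥ M.mulVec w = (Mᵀ.mulVec v) ⬝ᵥ w := by
  rw [dotProduct_mulVec, ← vecMul_transpose, transpose_transpose]

lemma row_mulVec {n : ℕ} (C : Matrix (Fin 1) (Fin n) ℝ) (v : Fin n → ℝ) :
    C.mulVec v 0 = C 0 ⬝ᵥ v := rfl

lemma key_algebra {n : ℕ} (Aₘ S Γₘ P P' : Matrix (Fin n) (Fin n) ℝ)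
    (Q Q' Rₘ : Matrix (Fin 1) (Fin n) ℝ) (Bₘ : Matrix (Fin n) (Fin 1) ℝ) (k tr : ℝ)
    (hSsym : Sᵀ = S)
    (hP' : P' = Γₘ - (Pᵀ + P) * Aₘ - (1/2 : ℝ) • ((P + Pᵀ) * S * (P + Pᵀ)))
    (hQ' : Q' = Rₘ - Q * Aₘ - Bₘᵀ * (P + Pᵀ) - Q * S * (P + Pᵀ))
    (x : Fin n → ℝ)
    (htr : ∑ i, ∑ j, S i j * (P + Pᵀ) i j = 2 * tr) :
    (x ⬝ᵥ P'.mulVec x + Q'.mulVec x 0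
        + (k - (Q * Bₘ) 0 0 - (1/2) * (Q * S * Qᵀ) 0 0 - tr))
      + (Aₘ.mulVec x + (fun i => Bₘ i 0)) ⬝ᵥ ((P + Pᵀ).mulVec x + Q 0)
      + (1/2) * (((P + Pᵀ).mulVec x + Q 0) ⬝ᵥ S.mulVec ((P + Pᵀ).mulVec x + Q 0)
          + ∑ i, ∑ j, S i j * (P + Pᵀ) i j)
      = x ⬝ᵥ Γₘ.mulVec x + Rₘ.mulVec x 0 + k := by
  have hMsym : (P + Pᵀ)ᵀ = P + Pᵀ := by
    rw [Matrix.transpose_add, Matrix.transpose_transpose, add_comm]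
  have g1 : x ⬝ᵥ ((Pᵀ + P) * Aₘ).mulVec x = (Aₘ.mulVec x) ⬝ᵥ ((P + Pᵀ).mulVec x) := by
    rw [← mulVec_mulVec, dot_mulVec_flip, Matrix.transpose_add, Matrix.transpose_transpose,
      dotProduct_comm]
  have g2 : x ⬝ᵥ ((P + Pᵀ) * S * (P + Pᵀ)).mulVec x
      = ((P + Pᵀ).mulVec x) ⬝ᵥ S.mulVec ((P + Pᵀ).mulVec x) := by
    rw [← mulVec_mulVec, ← mulVec_mulVec, dot_mulVec_flip, hMsym]
  have g3 : (Q * Aₘ).mulVec x 0 = Q 0 ⬝ᵥ Aₘ.mulVec x := by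
    rw [← mulVec_mulVec, row_mulVec]
  have g4 : (Bₘᵀ * (P + Pᵀ)).mulVec x 0 = (fun i => Bₘ i 0) ⬝ᵥ ((P + Pᵀ).mulVec x) := by
    rw [← mulVec_mulVec, row_mulVec]
    congr 1
  have g5 : (Q * S * (P + Pᵀ)).mulVec x 0 = Q 0 ⬝ᵥ S.mulVec ((P + Pᵀ).mulVec x) := by
    rw [← mulVec_mulVec, ← mulVec_mulVec, row_mulVec]
  have g6 : (Q * Bₘ) 0 0 = Q 0 ⬝ᵥ (fun i => Bₘ i 0) := entry_CB Q Bₘ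
  have g7 : (Q * S * Qᵀ) 0 0 = Q 0 ⬝ᵥ S.mulVec (Q 0) := entry_CDCt Q S
  have g8 : ((P + Pᵀ).mulVec x) ⬝ᵥ S.mulVec (Q 0) = Q 0 ⬝ᵥ S.mulVec ((P + Pᵀ).mulVec x) := by
    rw [dot_mulVec_flip, hSsym, dotProduct_comm, dot_mulVec_flip, hSsym]
  have g9 : Q 0 ⬝ᵥ Aₘ.mulVec x = Aₘ.mulVec x ⬝ᵥ Q 0 := dotProduct_comm _ _
  have g10 : Q 0 ⬝ᵥ (fun i => Bₘ i 0) = (fun i => Bₘ i 0) ⬝ᵥ Q 0 := dotProduct_comm _ _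
  have g11 : (fun i => Bₘ i 0) ⬝ᵥ ((P + Pᵀ).mulVec x)
      = ((P + Pᵀ).mulVec x) ⬝ᵥ (fun i => Bₘ i 0) := dotProduct_comm _ _
  subst hP' hQ'
  simp only [sub_mulVec, smul_mulVec, dotProduct_sub, dotProduct_smul, Pi.sub_apply,
    smul_eq_mul, add_dotProduct, dotProduct_add, mulVec_add, g1, g2, g3, g4, g5, g6, g7,
    htr]
  rw [g8, g9, g10, g11] at *
  ring

/-- With `R₂`, `R₁` solving the bond Riccati equations and `R₀` its integral,
the function `f(t,x) = exp(xᵀR₂(t)x + R₁(t)x + R₀(t))` solves the term-structure PDE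
`∂f/∂t + (Ax+B)·∇ₓf + (1/2)Σ (σσᵀ)ᵢⱼ ∂²f/∂xᵢ∂xⱼ = (xᵀΓx + Rx + k) f` with `f(T,·) = 1`. -/
theorem statement11 (n : ℕ) (hn : 1 ≤ n) (T : ℝ) (hT : 0 < T)
    (A σ : Matrix (Fin n) (Fin n) ℝ) (B : Matrix (Fin n) (Fin 1) ℝ)
    (Γ : Matrix (Fin n) (Fin n) ℝ) (hΓ : Γ.PosSemidef)
    (R : Matrix (Fin 1) (Fin n) ℝ) (k : ℝ)
    (R₂ : ℝ → Matrix (Fin n) (Fin n) ℝ)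
    (hR₂smooth : ContDiffOn ℝ 1 R₂ (Icc 0 T))
    (hR₂ode : ∀ t ∈ Icc 0 T,
      derivWithin R₂ (Icc 0 T) t + ((R₂ t)ᵀ + R₂ t) * A - Γ
        + (1 / 2 : ℝ) • ((R₂ t + (R₂ t)ᵀ) * (σ * σᵀ) * (R₂ t + (R₂ t)ᵀ)) = 0)
    (hR₂T : R₂ T = 0)
    (R₁ : ℝ → Matrix (Fin 1) (Fin n) ℝ)
    (hR₁smooth : ContDiffOn ℝ 1 R₁ (Icc 0 T))
    (hR₁ode : ∀ t ∈ Icc 0 T,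
      derivWithin R₁ (Icc 0 T) t + R₁ t * A + Bᵀ * (R₂ t + (R₂ t)ᵀ) - R
        + R₁ t * (σ * σᵀ) * (R₂ t + (R₂ t)ᵀ) = 0)
    (hR₁T : R₁ T = 0)
    (R₀ : ℝ → ℝ)
    (hR₀ : ∀ t, R₀ t = -∫ s in t..T,
      (k - (R₁ s * B) 0 0 - (1 / 2) * (R₁ s * (σ * σᵀ) * (R₁ s)ᵀ) 0 0
        - Matrix.trace (σᵀ * R₂ s * σ)))
    (f : ℝ → (Fin n → ℝ) → ℝ)
    (hf : ∀ t x, f t x =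
      Real.exp (x ⬝ᵥ (R₂ t).mulVec x + (R₁ t).mulVec x 0 + R₀ t)) :
    (∀ t ∈ Icc 0 T, ∀ x : Fin n → ℝ,
      derivWithin (fun τ => f τ x) (Icc 0 T) t
        + (∑ i, (A.mulVec x i + B i 0) * pd i (f t) x)
        + (1 / 2) * ∑ i, ∑ j, (σ * σᵀ) i j * pd i (pd j (f t)) x
      = (x ⬝ᵥ Γ.mulVec x + R.mulVec x 0 + k) * f t x) ∧
    (∀ x : Fin n → ℝ, f T x = 1) := by
  -- the integrand of R₀
  set φ : ℝ → ℝ := fun s => k - (R₁ s * B) 0 0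
      - (1 / 2) * (R₁ s * (σ * σᵀ) * (R₁ s)ᵀ) 0 0 - Matrix.trace (σᵀ * R₂ s * σ) with hφ
  constructor
  · intro t ht x
    -- pointwise form of f t
    have hFt : ∀ y, f t y = Real.exp (y ⬝ᵥ (R₂ t).mulVec y + (R₁ t 0) ⬝ᵥ y + R₀ t) := by
      intro y; rw [hf]; rfl
    -- first spatial derivatives
    have hpd : ∀ j, pd j (f t) x
        = f t x * (((R₂ t + (R₂ t)ᵀ).mulVec x) j + R₁ t 0 j) :=
      fun j => pd_exp (R₂ t) (R₁ t 0) (R₀ t) (f t) hFt x j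
    have hpd2 : ∀ i j, pd i (pd j (f t)) x
        = f t x * ((((R₂ t + (R₂ t)ᵀ).mulVec x) i + R₁ t 0 i)
            * (((R₂ t + (R₂ t)ᵀ).mulVec x) j + R₁ t 0 j) + (R₂ t + (R₂ t)ᵀ) i j) :=
      fun i j => pd2_exp (R₂ t) (R₁ t 0) (R₀ t) (f t) hFt x i j
    -- entrywise time derivatives
    have hR2d : HasDerivWithinAt R₂ (derivWithin R₂ (Icc 0 T) t) (Icc 0 T) t :=
      ((hR₂smooth.differentiableOn one_ne_zero) t ht).hasDerivWithinAt
    have hR1d : HasDerivWithinAt R₁ (derivWithin R₁ (Icc 0 T) t) (Icc 0 T) t :=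
      ((hR₁smooth.differentiableOn one_ne_zero) t ht).hasDerivWithinAt
    have hR2e : ∀ i j, HasDerivWithinAt (fun τ => R₂ τ i j)
        (derivWithin R₂ (Icc 0 T) t i j) (Icc 0 T) t := by
      intro i j
      exact (hasDerivWithinAt_pi.mp ((hasDerivWithinAt_pi.mp hR2d) i)) j
    have hR1e : ∀ j, HasDerivWithinAt (fun τ => R₁ τ 0 j)
        (derivWithin R₁ (Icc 0 T) t 0 j) (Icc 0 T) t := by
      intro j
      exact (hasDerivWithinAt_pi.mp ((hasDerivWithinAt_pi.mp hR1d) 0)) j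
    -- derivative of the quadratic part
    have hquad : HasDerivWithinAt (fun τ => x ⬝ᵥ (R₂ τ).mulVec x)
        (x ⬝ᵥ (derivWithin R₂ (Icc 0 T) t).mulVec x) (Icc 0 T) t := by
      have e1 : ∀ Q : Matrix (Fin n) (Fin n) ℝ,
          x ⬝ᵥ Q.mulVec x = ∑ i, ∑ j, (x i * x j) * Q i j := by
        intro Q
        simp only [dotProduct, mulVec, Finset.mul_sum]
        exact Finset.sum_congr rfl fun i _ => Finset.sum_congr rfl fun j _ => by ring
      simp only [e1]
      exact HasDerivWithinAt.fun_sum fun i _ =>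
        HasDerivWithinAt.fun_sum fun j _ => (hR2e i j).const_mul _
    -- derivative of the linear part
    have hlin : HasDerivWithinAt (fun τ => (R₁ τ).mulVec x 0)
        ((derivWithin R₁ (Icc 0 T) t).mulVec x 0) (Icc 0 T) t := by
      have e1 : ∀ Q : Matrix (Fin 1) (Fin n) ℝ, Q.mulVec x 0 = ∑ j, Q 0 j * x j := by
        intro Q; simp [Matrix.mulVec, dotProduct]
      simp only [e1]
      exact HasDerivWithinAt.fun_sum fun j _ => (hR1e j).mul_const _
    -- derivative of R₀
    have hφcont : ContinuousOn φ (Icc 0 T) := by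
      have hc1 : ∀ j, ContinuousOn (fun s => R₁ s 0 j) (Icc 0 T) := by
        intro j
        have e0 : Continuous (fun m : Matrix (Fin 1) (Fin n) ℝ => m 0 j) := by
          have h1 : Continuous (fun m : Matrix (Fin 1) (Fin n) ℝ => m 0) :=
            continuous_apply (0 : Fin 1)
          exact (continuous_apply j).comp h1
        exact e0.comp_continuousOn hR₁smooth.continuousOn
      have hc2 : ∀ i j, ContinuousOn (fun s => R₂ s i j) (Icc 0 T) := by
        intro i j
        have e0 : Continuous (fun m : Matrix (Fin n) (Fin n) ℝ => m i j) := by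
          have h1 : Continuous (fun m : Matrix (Fin n) (Fin n) ℝ => m i) :=
            continuous_apply i
          exact (continuous_apply j).comp h1
        exact e0.comp_continuousOn hR₂smooth.continuousOn
      rw [hφ]
      apply ContinuousOn.sub
      apply ContinuousOn.sub
      apply ContinuousOn.sub
      · exact continuousOn_const
      · simp only [Matrix.mul_apply]
        exact continuousOn_finset_sum _ fun j _ => (hc1 j).mul continuousOn_const
      · apply ContinuousOn.mul continuousOn_const
        simp only [Matrix.mul_apply, Matrix.transpose_apply]
        exact continuousOn_finset_sum _ fun j _ => ContinuousOn.mul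
          (continuousOn_finset_sum _ fun l _ => (hc1 l).mul continuousOn_const) (hc1 j)
      · simp only [Matrix.trace, Matrix.diag, Matrix.mul_apply]
        exact continuousOn_finset_sum _ fun i _ => continuousOn_finset_sum _ fun j _ =>
          ContinuousOn.mul
            (continuousOn_finset_sum _ fun l _ => ContinuousOn.mul continuousOn_const (hc2 l j))
            continuousOn_const
    have hclamp : ∀ s ∈ Icc (0:ℝ) T, max 0 (min s T) = s := by
      intro s hs
      rw [min_eq_left hs.2, max_eq_right hs.1]
    have hclamp_mem : ∀ s : ℝ, max 0 (min s T) ∈ Icc (0:ℝ) T := by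
      intro s
      exact ⟨le_max_left _ _, max_le hT.le (min_le_right s T)⟩
    have hψc : Continuous (fun s => φ (max 0 (min s T))) :=
      hφcont.comp_continuous
        (continuous_const.max (continuous_id.min continuous_const)) hclamp_mem
    have hint : ∀ u ∈ Icc (0:ℝ) T, R₀ u = -∫ s in u..T, φ (max 0 (min s T)) := by
      intro u hu
      rw [hR₀ u]
      congr 1
      apply intervalIntegral.integral_congr
      intro s hs
      rw [Set.uIcc_of_le hu.2] at hs
      have hs' : s ∈ Icc (0:ℝ) T := ⟨hu.1.trans hs.1, hs.2⟩
      show φ s = φ (max 0 (min s T))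
      rw [hclamp s hs']
    have hR0d : HasDerivWithinAt R₀ (φ t) (Icc 0 T) t := by
      have hI : HasDerivAt (fun u => -∫ s in u..T, φ (max 0 (min s T)))
          (φ (max 0 (min t T))) t := by
        have := intervalIntegral.integral_hasDerivAt_left
          (hψc.intervalIntegrable t T)
          (hψc.stronglyMeasurableAtFilter _ _) hψc.continuousAt
        simpa using this.fun_neg
      have h3 : HasDerivWithinAt R₀ (φ (max 0 (min t T))) (Icc 0 T) t :=
        (hI.hasDerivWithinAt).congr (fun u hu => hint u hu) (hint t ht)
      rwa [hclamp t ht] at h3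
    -- time derivative of f · x
    have hU := (hquad.fun_add hlin).fun_add hR0d
    have hderiv : derivWithin (fun τ => f τ x) (Icc 0 T) t
        = f t x * (x ⬝ᵥ (derivWithin R₂ (Icc 0 T) t).mulVec x
            + (derivWithin R₁ (Icc 0 T) t).mulVec x 0 + φ t) := by
      have hfx : (fun τ => f τ x)
          = fun τ => Real.exp (x ⬝ᵥ (R₂ τ).mulVec x + (R₁ τ).mulVec x 0 + R₀ τ) :=
        funext fun τ => hf τ x
      rw [hfx, (hU.exp).derivWithin (uniqueDiffOn_Icc hT t ht), ← hf]
    -- first order sum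
    have hsum1 : (∑ i, (A.mulVec x i + B i 0) * pd i (f t) x)
        = f t x * ((A.mulVec x + (fun i => B i 0))
            ⬝ᵥ ((R₂ t + (R₂ t)ᵀ).mulVec x + R₁ t 0)) := by
      rw [dotProduct, Finset.mul_sum]
      refine Finset.sum_congr rfl fun i _ => ?_
      rw [hpd i]
      simp only [Pi.add_apply]
      ring
    -- second order sum
    have hsum2 : (∑ i, ∑ j, (σ * σᵀ) i j * pd i (pd j (f t)) x)
        = f t x * ((((R₂ t + (R₂ t)ᵀ).mulVec x + R₁ t 0)
              ⬝ᵥ (σ * σᵀ).mulVec ((R₂ t + (R₂ t)ᵀ).mulVec x + R₁ t 0))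
            + ∑ i, ∑ j, (σ * σᵀ) i j * (R₂ t + (R₂ t)ᵀ) i j) := by
      have hdSd : (((R₂ t + (R₂ t)ᵀ).mulVec x + R₁ t 0)
              ⬝ᵥ (σ * σᵀ).mulVec ((R₂ t + (R₂ t)ᵀ).mulVec x + R₁ t 0))
          = ∑ i, ∑ j, (σ * σᵀ) i j
              * ((((R₂ t + (R₂ t)ᵀ).mulVec x + R₁ t 0) i)
                * (((R₂ t + (R₂ t)ᵀ).mulVec x + R₁ t 0) j)) := by
        simp only [dotProduct, mulVec, Finset.mul_sum]
        exact Finset.sum_congr rfl fun i _ => Finset.sum_congr rfl fun j _ => by ring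
      rw [hdSd, mul_add, Finset.mul_sum, Finset.mul_sum, ← Finset.sum_add_distrib]
      refine Finset.sum_congr rfl fun i _ => ?_
      rw [Finset.mul_sum, Finset.mul_sum, ← Finset.sum_add_distrib]
      refine Finset.sum_congr rfl fun j _ => ?_
      rw [hpd2 i j]
      simp only [Pi.add_apply]
      ring
    -- Riccati equations rearranged
    have hP' : derivWithin R₂ (Icc 0 T) t
        = Γ - ((R₂ t)ᵀ + R₂ t) * A
          - (1/2 : ℝ) • ((R₂ t + (R₂ t)ᵀ) * (σ * σᵀ) * (R₂ t + (R₂ t)ᵀ)) := by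
      have h := hR₂ode t ht
      apply eq_of_sub_eq_zero
      rw [← h]
      abel
    have hQ' : derivWithin R₁ (Icc 0 T) t
        = R - R₁ t * A - Bᵀ * (R₂ t + (R₂ t)ᵀ) - R₁ t * (σ * σᵀ) * (R₂ t + (R₂ t)ᵀ) := by
      have h := hR₁ode t ht
      apply eq_of_sub_eq_zero
      rw [← h]
      abel
    have hSsym : (σ * σᵀ)ᵀ = σ * σᵀ := by
      rw [Matrix.transpose_mul, Matrix.transpose_transpose]
    have key := key_algebra A (σ * σᵀ) Γ (R₂ t) (derivWithin R₂ (Icc 0 T) t)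
      (R₁ t) (derivWithin R₁ (Icc 0 T) t) R B k (Matrix.trace (σᵀ * R₂ t * σ))
      hSsym hP' hQ' x (double_sum_trace σ (R₂ t))
    rw [hderiv, hsum1, hsum2, hφ]
    have hφt : φ t = k - (R₁ t * B) 0 0
        - (1 / 2) * (R₁ t * (σ * σᵀ) * (R₁ t)ᵀ) 0 0 - Matrix.trace (σᵀ * R₂ t * σ) := rfl
    linear_combination (f t x) * key
  · intro x
    rw [hf, hR₂T, hR₁T, hR₀]
    simp [intervalIntegral.integral_same]
end
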